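/- arXiv:1303.6140 — 2 statements merged into one kernel-verified Lean document; each statement's English description precedes it below -/
import Mathlib

section
/- Let q > 3, let φ, φ̃ ∈ Φ_q, set h = φ̃ − φ, and fix s > 0. Then the function λ ↦ a_{φ+λh}^{-1}(s) is C¹ on [0,1], and for all λ ∈ [0,1], ∂/∂λ [a_{φ+λh}^{-1}(s)] = [∫_{ℝ³} K(a_{φ+λh}^{-1}(s) − φ(x) − λ h(x)) h(x) dx] / [∫_{ℝ³} K(a_{φ+λh}^{-1}(s) − φ(x) − λ h(x)) dx], where K(η) = (((1+η)₊² − 1)₊)^{1/2} (1+η). -/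
noncomputable section

open MeasureTheory Real Set Filter Topology
open scoped ENNReal NNReal

/-- Physical space ℝ³. -/
abbrev Sp : Type := EuclideanSpace ℝ (Fin 3)

/-- Phase space ℝ³ × ℝ³. -/
abbrev Ph : Type := Sp × Sp

/-- The relativistic velocity weight √(1+|v|²). -/
def vW (v : Sp) : ℝ := Real.sqrt (1 + ‖v‖ ^ 2)

/-- The L¹ norm on phase space. -/
def L1n (f : Ph → ℝ) : ℝ := ∫ z : Ph, |f z|

/-- The L^p norm on phase space. -/
def Lpn (p : ℝ) (f : Ph → ℝ) : ℝ := (eLpNorm f (ENNReal.ofReal p) volume).toReal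

/-- The weighted norm ‖√(1+|v|²) f‖_{L¹}. -/
def kinN (f : Ph → ℝ) : ℝ := ∫ z : Ph, vW z.2 * |f z|

/-- Membership in the energy space E_p. -/
structure IsEp (p : ℝ) (f : Ph → ℝ) : Prop where
  nonneg : ∀ z, 0 ≤ f z
  meas : Measurable f
  l1 : Integrable f volume
  lp : MemLp f (ENNReal.ofReal p) volume
  kin : Integrable (fun z : Ph => vW z.2 * f z) volume

/-- The norm of the energy space E_p. -/
def EpNorm (p : ℝ) (f : Ph → ℝ) : ℝ := L1n f + Lpn p f + kinN f

/-- The spatial density ρ_f. -/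
def dens (f : Ph → ℝ) (x : Sp) : ℝ := ∫ v : Sp, f (x, v)

/-- The gravitational potential φ_f = -(1/4π) ∫ ρ_f(y)/|x-y| dy. -/
def pot (f : Ph → ℝ) (x : Sp) : ℝ := -(1 / (4 * π)) * ∫ y : Sp, dens f y / ‖x - y‖

/-- The L² norm of the gradient ‖∇φ‖_{L²}. -/
def gradL2 (φ : Sp → ℝ) : ℝ := (eLpNorm (gradient φ) 2 volume).toReal

/-- The L² norm of the difference of two gradients ‖∇φ - ∇ψ‖_{L²}. -/
def gradL2diff (φ ψ : Sp → ℝ) : ℝ :=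
  (eLpNorm (fun x => gradient φ x - gradient ψ x) 2 volume).toReal

/-- The Hamiltonian H(f). -/
def Ham (f : Ph → ℝ) : ℝ :=
  (∫ z : Ph, (vW z.2 - 1) * f z) - (1 / 2) * ∫ x : Sp, ‖gradient (pot f) x‖ ^ 2

/-- The distribution function μ_f(s) = meas{f > s}. -/
def distFun (f : Ph → ℝ) (s : ℝ) : ℝ≥0∞ := volume {z : Ph | s < f z}

/-- The Schwarz rearrangement f*(t) = inf{s ≥ 0 : μ_f(s) ≤ t}. -/
def schwarz (f : Ph → ℝ) (t : ℝ) : ℝ :=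
  sInf {s : ℝ | 0 ≤ s ∧ distFun f s ≤ ENNReal.ofReal t}

/-- m(φ) = inf_x (1+|x|)|φ(x)|. -/
def mPhi (φ : Sp → ℝ) : ℝ := ⨅ x : Sp, (1 + ‖x‖) * |φ x|

/-- Membership in the potential space Φ_q. -/
structure IsPhiq (q : ℝ) (φ : Sp → ℝ) : Prop where
  nonpos : ∀ x, φ x ≤ 0
  lq : MemLp φ (ENNReal.ofReal q) volume
  grad : MemLp (gradient φ) 2 volume
  zeroAtInfty : Tendsto φ (cocompact Sp) (𝓝 0)
  m_pos : 0 < mPhi φ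

/-- The L^q norm on ℝ³. -/
def Lqn (q : ℝ) (φ : Sp → ℝ) : ℝ := (eLpNorm φ (ENNReal.ofReal q) volume).toReal

/-- The microscopic energy e(x,v) = √(1+|v|²) - 1 + φ(x). -/
def microE (φ : Sp → ℝ) (z : Ph) : ℝ := vW z.2 - 1 + φ z.1

/-- The Jacobian a_φ(e), as an extended nonnegative real. -/
def aJacE (φ : Sp → ℝ) (e : ℝ) : ℝ≥0∞ := volume {z : Ph | microE φ z < e}

/-- The Jacobian a_φ(e) (real-valued). -/
def aJac (φ : Sp → ℝ) (e : ℝ) : ℝ := (aJacE φ e).toReal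

/-- The inverse a_φ^{-1}(s) of the Jacobian. -/
def aJacInv (φ : Sp → ℝ) (s : ℝ) : ℝ := sSup {e : ℝ | e < 0 ∧ aJac φ e < s}

/-- The essential infimum of φ, valued in EReal. -/
def essInfE (φ : Sp → ℝ) : EReal := essInf (fun x => (φ x : EReal)) volume

/-- The rearrangement f^{*φ} of f with respect to the microscopic energy of φ. -/
def rearr (f : Ph → ℝ) (φ : Sp → ℝ) (z : Ph) : ℝ :=
  if microE φ z < 0 then schwarz f (aJac φ (microE φ z)) else 0

/-- The reduced functional J(φ). -/
def Jfun (Q : Ph → ℝ) (φ : Sp → ℝ) : ℝ :=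
  (∫ z : Ph, microE φ z * rearr Q φ z) + (1 / 2) * ∫ x : Sp, ‖gradient φ x‖ ^ 2

/-- The kernel K(η) = (((1+η)₊² - 1)₊)^{1/2} (1+η). -/
def Kfun (η : ℝ) : ℝ := Real.sqrt (max ((max (1 + η) 0) ^ 2 - 1) 0) * (1 + η)

/-- Radial symmetry of a function on ℝ³. -/
def IsRadial (φ : Sp → ℝ) : Prop := ∀ x y : Sp, ‖x‖ = ‖y‖ → φ x = φ y

/-- The standing assumptions on the steady state Q. -/
structure IsSteadyState (Q : Ph → ℝ) (F : ℝ → ℝ) (eQ : ℝ) : Prop where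
  cont : Continuous Q
  nonneg : ∀ z, 0 ≤ Q z
  nonzero : Q ≠ 0
  cpt : HasCompactSupport Q
  radial : ∀ x v x' v' : Sp, ‖x‖ = ‖x'‖ → ‖v‖ = ‖v'‖ → Q (x, v) = Q (x', v')
  Fcont : Continuous F
  Fnonneg : ∀ e, 0 ≤ F e
  eQ_neg : eQ < 0
  Fzero : ∀ e, eQ ≤ e → F e = 0
  Fsmooth : ContDiffOn ℝ 1 F (Iio eQ)
  Fanti : StrictAntiOn F (Iio eQ)
  eqF : ∀ z : Ph, Q z = F (microE (pot Q) z)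

/-- The microscopic energy of the steady state: e_Q(x,v). -/
def eQfun (Q : Ph → ℝ) (z : Ph) : ℝ := microE (pot Q) z

/-- The projection Πh onto functions of the microscopic energy e_Q. -/
def PiProj (Q : Ph → ℝ) (h : Sp → ℝ) (z : Ph) : ℝ :=
  (∫ y : Sp, Kfun (eQfun Q z - pot Q y) * h y) / (∫ y : Sp, Kfun (eQfun Q z - pot Q y))

/-- The second derivative D²J(φ_Q)(h,h). -/
def D2J (Q : Ph → ℝ) (F : ℝ → ℝ) (h : Sp → ℝ) : ℝ :=
  (∫ x : Sp, ‖gradient h x‖ ^ 2) -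
    ∫ z : Ph, |deriv F (eQfun Q z)| * (h z.1 - PiProj Q h z) ^ 2

namespace Stmt7Aux

lemma inner_max_eq (t : ℝ) : max ((max (1 + t) 0) ^ 2 - 1) 0 = max t 0 * (max t 0 + 2) := by
  rcases le_or_gt t 0 with ht | ht
  · have h0 : (0:ℝ) ≤ max (1 + t) 0 := le_max_right _ _
    have h1 : max (1 + t) 0 ≤ 1 := max_le (by linarith) zero_le_one
    have : (max (1 + t) 0) ^ 2 - 1 ≤ 0 := by nlinarith
    rw [max_eq_right this, max_eq_right ht]; ring
  · have h1 : max (1 + t) 0 = 1 + t := max_eq_left (by linarith)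
    have h2 : max t 0 = t := max_eq_left ht.le
    rw [h1, h2, max_eq_left (by nlinarith)]; ring

def gfun (t : ℝ) : ℝ := Real.sqrt (max t 0 * (max t 0 + 2)) ^ 3

lemma Kfun_eq (t : ℝ) : Kfun t = Real.sqrt (max t 0 * (max t 0 + 2)) * (1 + t) := by
  rw [Kfun, inner_max_eq]

lemma Kfun_of_nonpos {t : ℝ} (ht : t ≤ 0) : Kfun t = 0 := by
  rw [Kfun_eq, max_eq_right ht]; simp

lemma gfun_of_nonpos {t : ℝ} (ht : t ≤ 0) : gfun t = 0 := by
  rw [gfun, max_eq_right ht]; simp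

lemma gfun_nonneg (t : ℝ) : 0 ≤ gfun t := pow_nonneg (Real.sqrt_nonneg _) 3

lemma Kfun_pos {t : ℝ} (ht : 0 < t) : 0 < Kfun t := by
  rw [Kfun_eq, max_eq_left ht.le]
  have : (0:ℝ) < t * (t + 2) := by nlinarith
  exact mul_pos (Real.sqrt_pos.2 this) (by linarith)

lemma Kfun_nonneg (t : ℝ) : 0 ≤ Kfun t := by
  rcases le_or_gt t 0 with ht | ht
  · rw [Kfun_of_nonpos ht]
  · exact (Kfun_pos ht).le

lemma gfun_pos {t : ℝ} (ht : 0 < t) : 0 < gfun t := by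
  rw [gfun, max_eq_left ht.le]
  have : (0:ℝ) < t * (t + 2) := by nlinarith
  positivity

lemma gfun_ne_iff {t : ℝ} : gfun t ≠ 0 ↔ 0 < t := by
  constructor
  · intro h
    by_contra hc
    exact h (gfun_of_nonpos (not_lt.1 hc))
  · exact fun h => (gfun_pos h).ne'

lemma gfun_mono : Monotone gfun := by
  intro a b hab
  have h0 : (0:ℝ) ≤ max a 0 := le_max_right _ _
  have h1 : max a 0 ≤ max b 0 := max_le_max hab le_rfl
  exact pow_le_pow_left₀ (Real.sqrt_nonneg _)
    (Real.sqrt_le_sqrt (by nlinarith)) 3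

lemma gfun_strict {a b : ℝ} (ha : 0 < a) (hab : a < b) : gfun a < gfun b := by
  rw [gfun, gfun, max_eq_left ha.le, max_eq_left (by linarith)]
  refine pow_lt_pow_left₀ (Real.sqrt_lt_sqrt (by nlinarith) (by nlinarith)) (Real.sqrt_nonneg _) (by norm_num)

lemma Kfun_mono : Monotone Kfun := by
  intro a b hab
  rcases le_or_gt b 0 with hb | hb
  · rw [Kfun_of_nonpos hb, Kfun_of_nonpos (hab.trans hb)]
  rcases le_or_gt a 0 with ha | ha
  · rw [Kfun_of_nonpos ha]; exact Kfun_nonneg b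
  rw [Kfun_eq, Kfun_eq, max_eq_left ha.le, max_eq_left hb.le]
  have := Real.sqrt_nonneg (a * (a+2))
  exact mul_le_mul (Real.sqrt_le_sqrt (by nlinarith)) (by linarith) (by linarith) (Real.sqrt_nonneg _)

lemma Kfun_cont : Continuous Kfun := by
  have : Kfun = fun t => Real.sqrt (max t 0 * (max t 0 + 2)) * (1 + t) := funext Kfun_eq
  rw [this]
  exact (Real.continuous_sqrt.comp (by continuity)).mul (by continuity)

lemma sqrt_le_add_two {m : ℝ} (hm : 0 ≤ m) : Real.sqrt (m * (m + 2)) ≤ m + 2 := by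
  have : m + 2 = Real.sqrt ((m + 2) ^ 2) := (Real.sqrt_sq (by linarith)).symm
  rw [this]
  exact Real.sqrt_le_sqrt (by nlinarith)

lemma Kfun_le (t : ℝ) : Kfun t ≤ (max t 0 + 2) ^ 2 := by
  rcases le_or_gt t 0 with ht | ht
  · rw [Kfun_of_nonpos ht]; positivity
  · rw [Kfun_eq, max_eq_left ht.le]
    have h1 := sqrt_le_add_two ht.le
    have h2 : (1:ℝ) + t ≤ t + 2 := by linarith
    have := Real.sqrt_nonneg (t*(t+2))
    calc Real.sqrt (t*(t+2)) * (1+t) ≤ (t+2)*(t+2) :=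
      mul_le_mul h1 h2 (by linarith) (by linarith)
    _ = (t+2)^2 := by ring

lemma gfun_le (t : ℝ) : gfun t ≤ (max t 0 + 2) ^ 3 := by
  have h0 : (0:ℝ) ≤ max t 0 := le_max_right _ _
  exact pow_le_pow_left₀ (Real.sqrt_nonneg _) (sqrt_le_add_two h0) 3

lemma gfun_lb {t : ℝ} (ht : 0 ≤ t) : min 1 (4 * t ^ 2) ≤ gfun t := by
  have hmax : max t 0 = t := max_eq_left ht
  have hmono : Real.sqrt (2 * t) ^ 3 ≤ gfun t := by
    rw [gfun, hmax]
    exact pow_le_pow_left₀ (Real.sqrt_nonneg _) (Real.sqrt_le_sqrt (by nlinarith)) 3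
  rcases le_or_gt 1 (2 * t) with h | h
  · refine (min_le_left _ _).trans (le_trans ?_ hmono)
    have h1s : (1:ℝ) ≤ Real.sqrt (2*t) := by
      rw [show (1:ℝ) = Real.sqrt 1 from (Real.sqrt_one).symm]
      exact Real.sqrt_le_sqrt h
    have := pow_le_pow_left₀ (by norm_num : (0:ℝ) ≤ 1) h1s 3
    simpa using this
  · refine (min_le_right _ _).trans (le_trans ?_ hmono)
    have h2t : 0 ≤ 2 * t := by linarith
    have hs : 2 * t ≤ Real.sqrt (2 * t) := by
      rw [show Real.sqrt (2*t) = Real.sqrt (2*t) from rfl]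
      nlinarith [Real.sq_sqrt h2t, Real.sqrt_nonneg (2*t), sq_nonneg (Real.sqrt (2*t) - 2*t), sq_nonneg (Real.sqrt (2*t) + 2*t)]
    have hsq : Real.sqrt (2*t) ^ 2 = 2 * t := Real.sq_sqrt h2t
    have : Real.sqrt (2*t) ^ 3 = 2 * t * Real.sqrt (2 * t) := by
      rw [pow_succ, hsq]
    rw [this]
    nlinarith [Real.sqrt_nonneg (2*t)]

lemma hasDerivAt_gfun (t : ℝ) : HasDerivAt gfun (3 * Kfun t) t := by
  rcases lt_trichotomy t 0 with ht | rfl | ht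
  · rw [Kfun_of_nonpos ht.le, mul_zero]
    have hev : gfun =ᶠ[𝓝 t] (fun _ => (0:ℝ)) := by
      filter_upwards [Iio_mem_nhds ht] with u hu
      exact gfun_of_nonpos (le_of_lt hu)
    exact (hasDerivAt_const t (0:ℝ)).congr_of_eventuallyEq hev
  · rw [Kfun_of_nonpos le_rfl, mul_zero]
    rw [hasDerivAt_iff_tendsto]
    have key : ∀ u : ℝ, |u| ≤ 1 → ‖u - 0‖⁻¹ * ‖gfun u - gfun 0 - (u - 0) * 0‖ ≤ 6 * Real.sqrt |u| := by
      intro u hu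
      rw [gfun_of_nonpos le_rfl]
      simp only [sub_zero, mul_zero]
      rcases le_or_gt u 0 with hu0 | hu0
      · rw [gfun_of_nonpos hu0]
        simp

      · have h1 : gfun u ≤ Real.sqrt (3 * u) ^ 3 := by
          rw [gfun, max_eq_left hu0.le]
          refine pow_le_pow_left₀ (Real.sqrt_nonneg _) (Real.sqrt_le_sqrt ?_) 3
          nlinarith [abs_of_pos hu0 ▸ hu]
        have h3u : (0:ℝ) ≤ 3 * u := by linarith
        have hsq : Real.sqrt (3*u) ^ 2 = 3 * u := Real.sq_sqrt h3u
        have h2 : Real.sqrt (3*u) ^ 3 = 3 * u * Real.sqrt (3*u) := by rw [pow_succ, hsq]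
        have hs3 : Real.sqrt (3*u) ≤ 2 * Real.sqrt u := by
          rw [show (2:ℝ) * Real.sqrt u = Real.sqrt (4 * u) by
            rw [show (4:ℝ)*u = 2^2 * u by ring, Real.sqrt_mul (by positivity), Real.sqrt_sq (by norm_num)]]
          exact Real.sqrt_le_sqrt (by linarith)
        have habs : |u| = u := abs_of_pos hu0
        rw [norm_eq_abs, norm_eq_abs, habs, abs_of_nonneg (gfun_nonneg u)]
        rw [inv_mul_le_iff₀ hu0]
        calc gfun u ≤ 3 * u * Real.sqrt (3*u) := h2 ▸ h1
          _ ≤ 3 * u * (2 * Real.sqrt u) := by nlinarith [Real.sqrt_nonneg (3*u)]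
          _ = u * (6 * Real.sqrt u) := by ring
    have hb : Tendsto (fun u : ℝ => 6 * Real.sqrt |u|) (𝓝 0) (𝓝 0) := by
      have : Continuous fun u : ℝ => 6 * Real.sqrt |u| := by continuity
      simpa using this.tendsto 0
    refine squeeze_zero' ?_ ?_ hb
    · filter_upwards with u; positivity
    · filter_upwards [Metric.ball_mem_nhds (0:ℝ) one_pos] with u hu
      have hu' := Metric.mem_ball.1 hu
      rw [Real.dist_eq, sub_zero] at hu'
      exact key u hu'.le
  · have hX : (0:ℝ) < t * (t + 2) := by nlinarith
    have h1 : HasDerivAt (fun u : ℝ => u * (u + 2)) (2 * t + 2) t := by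
      have h1' := (hasDerivAt_id t).mul ((hasDerivAt_id t).add_const 2)
      refine h1'.congr_deriv ?_
      simp [id_eq]
      ring
    have h2 := (Real.hasDerivAt_sqrt hX.ne').comp t h1
    have h3 := h2.pow 3
    have hF : HasDerivAt (fun u : ℝ => Real.sqrt (u * (u + 2)) ^ 3) (3 * Kfun t) t := by
      refine h3.congr_deriv ?_
      have hs := Real.sq_sqrt hX.le
      have hns : Real.sqrt (t * (t+2)) ≠ 0 := (Real.sqrt_pos.2 hX).ne'
      rw [Kfun_eq, max_eq_left ht.le]
      field_simp
      simp only [Function.comp_apply, Nat.cast_ofNat, show (3:ℕ) - 1 = 2 from rfl]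
      nlinarith [Real.sq_sqrt hX.le, Real.sqrt_nonneg (t*(t+2))]
    refine hF.congr_of_eventuallyEq ?_
    filter_upwards [Ioi_mem_nhds ht] with u hu
    rw [gfun, max_eq_left (le_of_lt hu)]

end Stmt7Aux

namespace Stmt7Aux

lemma vW_cont : Continuous vW := by
  unfold vW
  exact Real.continuous_sqrt.comp (by continuity)

lemma vW_ge_one (v : Sp) : 1 ≤ vW v := by
  unfold vW
  nlinarith [Real.sq_sqrt (show (0:ℝ) ≤ 1 + ‖v‖^2 by positivity),
    Real.sqrt_nonneg (1 + ‖v‖^2), sq_nonneg ‖v‖, sq_nonneg (Real.sqrt (1+‖v‖^2) - 1)]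

def cB : ℝ≥0∞ := volume (Metric.ball (0:Sp) 1)

lemma cB_pos : 0 < cB := Metric.measure_ball_pos _ _ one_pos

lemma cB_ne_top : cB ≠ ∞ := measure_ball_lt_top.ne

lemma cB_toReal_pos : 0 < cB.toReal :=
  ENNReal.toReal_pos cB_pos.ne' cB_ne_top

lemma finrank_Sp : Module.finrank ℝ Sp = 3 := finrank_euclideanSpace_fin

lemma vol_vset (t : ℝ) :
    volume {v : Sp | vW v < 1 + t} = cB * ENNReal.ofReal (gfun t) := by
  rcases le_or_gt t 0 with ht | ht
  · have : {v : Sp | vW v < 1 + t} = ∅ := by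
      ext v
      simp only [mem_setOf_eq, mem_empty_iff_false, iff_false, not_lt]
      linarith [vW_ge_one v]
    rw [this, gfun_of_nonpos ht]
    simp
  · have hX : (0:ℝ) < t * (t + 2) := by nlinarith
    have hseteq : {v : Sp | vW v < 1 + t} = Metric.ball (0:Sp) (Real.sqrt (t * (t+2))) := by
      ext v
      simp only [mem_setOf_eq, Metric.mem_ball, dist_zero_right]
      unfold vW
      rw [Real.sqrt_lt' (by linarith : (0:ℝ) < 1+t), Real.lt_sqrt (norm_nonneg v)]
      constructor <;> intro h <;> nlinarith
    rw [hseteq, Measure.addHaar_ball (μ := volume) (0:Sp) (Real.sqrt_nonneg _), finrank_Sp,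
      mul_comm]
    unfold cB gfun
    rw [max_eq_left ht.le]

lemma microE_meas {u : Sp → ℝ} (hu : Measurable u) : Measurable (microE u) := by
  unfold microE
  exact ((vW_cont.measurable.comp measurable_snd).sub measurable_const).add
    (hu.comp measurable_fst)

lemma aJacE_eq {u : Sp → ℝ} (hu : Measurable u) (e : ℝ) :
    aJacE u e = cB * ∫⁻ x : Sp, ENNReal.ofReal (gfun (e - u x)) := by
  have hset : MeasurableSet {z : Ph | microE u z < e} :=
    measurableSet_lt (microE_meas hu) measurable_const
  rw [aJacE, show (volume : Measure Ph) = (volume : Measure Sp).prod (volume : Measure Sp) from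
    Measure.volume_eq_prod _ _, Measure.prod_apply hset]
  have hsec : ∀ x : Sp, (Prod.mk x ⁻¹' {z : Ph | microE u z < e}) =
      {v : Sp | vW v < 1 + (e - u x)} := by
    intro x
    ext v
    simp only [mem_preimage, mem_setOf_eq, microE]
    constructor <;> intro h <;> linarith
  calc ∫⁻ x, volume (Prod.mk x ⁻¹' {z : Ph | microE u z < e})
      = ∫⁻ x, cB * ENNReal.ofReal (gfun (e - u x)) := by
        refine lintegral_congr fun x => ?_
        rw [hsec x, vol_vset]
    _ = cB * ∫⁻ x, ENNReal.ofReal (gfun (e - u x)) :=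
        lintegral_const_mul' _ _ cB_ne_top

lemma aJac_eq {u : Sp → ℝ} (hu : Measurable u) (e : ℝ)
    (hint : Integrable (fun x => gfun (e - u x)) volume) :
    aJac u e = cB.toReal * ∫ x : Sp, gfun (e - u x) := by
  rw [aJac, aJacE_eq hu,
    ← ofReal_integral_eq_lintegral_ofReal hint (ae_of_all _ fun x => gfun_nonneg _),
    ENNReal.toReal_mul, ENNReal.toReal_ofReal (integral_nonneg fun x => gfun_nonneg _)]

lemma aJacE_congr {u u' : Sp → ℝ} (h : u =ᵐ[(volume : Measure Sp)] u') (e : ℝ) :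
    aJacE u e = aJacE u' e := by
  have hT : (volume : Measure Sp) {x | u x ≠ u' x} = 0 := h
  obtain ⟨N, hTN, hNm, hN0⟩ := exists_measurable_superset_of_null hT
  have hprod : (volume : Measure Ph) (N ×ˢ (univ : Set Sp)) = 0 := by
    rw [show (volume : Measure Ph) = (volume : Measure Sp).prod (volume : Measure Sp) from
      Measure.volume_eq_prod _ _, Measure.prod_prod, hN0, zero_mul]
  refine measure_congr (ae_eq_set.2 ⟨?_, ?_⟩)
  · refine measure_mono_null (fun z hz => ?_) hprod
    rcases hz with ⟨hz1, hz2⟩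
    simp only [mem_setOf_eq, microE] at hz1 hz2
    constructor
    · apply hTN
      simp only [mem_setOf_eq]
      intro hequ
      exact hz2 (by rw [← hequ]; exact hz1)
    · trivial
  · refine measure_mono_null (fun z hz => ?_) hprod
    rcases hz with ⟨hz1, hz2⟩
    simp only [mem_setOf_eq, microE] at hz1 hz2
    constructor
    · apply hTN
      simp only [mem_setOf_eq]
      intro hequ
      exact hz2 (by rw [hequ]; exact hz1)
    · trivial

lemma aJac_congr {u u' : Sp → ℝ} (h : u =ᵐ[(volume : Measure Sp)] u') (e : ℝ) :
    aJac u e = aJac u' e := by rw [aJac, aJac, aJacE_congr h]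

lemma aJacInv_congr {u u' : Sp → ℝ} (h : u =ᵐ[(volume : Measure Sp)] u') (s : ℝ) :
    aJacInv u s = aJacInv u' s := by
  unfold aJacInv
  congr 1
  ext e
  simp only [mem_setOf_eq, aJac_congr h]

end Stmt7Aux


namespace Stmt7Aux

lemma gfun_cont : Continuous gfun :=
  continuous_iff_continuousAt.2 fun t => (hasDerivAt_gfun t).differentiableAt.continuousAt

structure Ctx (φ₀ h₀ : Sp → ℝ) : Prop where
  mφ : Measurable φ₀
  mh : Measurable h₀
  int3 : ∀ a b c R : ℝ, 0 ≤ a → 0 ≤ b → 0 ≤ c →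
      IntegrableOn (fun x => (a + b * |φ₀ x| + c * |h₀ x|) ^ 3) (Metric.closedBall 0 R) volume
  decay : ∀ ε : ℝ, 0 < ε → ∃ R : ℝ, 0 < R ∧
      ∀ᵐ x ∂(volume : Measure Sp), R ≤ ‖x‖ → |φ₀ x| + |h₀ x| ≤ ε

def argf (φ₀ h₀ : Sp → ℝ) (p : ℝ × ℝ) (x : Sp) : ℝ := p.2 - φ₀ x - p.1 * h₀ x

def Ifun (φ₀ h₀ : Sp → ℝ) (p : ℝ × ℝ) : ℝ := ∫ x : Sp, gfun (argf φ₀ h₀ p x)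

def IK (φ₀ h₀ : Sp → ℝ) (p : ℝ × ℝ) : ℝ := ∫ x : Sp, Kfun (argf φ₀ h₀ p x)

def IKh (φ₀ h₀ : Sp → ℝ) (p : ℝ × ℝ) : ℝ := ∫ x : Sp, Kfun (argf φ₀ h₀ p x) * h₀ x

def Lmap (φ₀ h₀ : Sp → ℝ) (p : ℝ × ℝ) : ℝ × ℝ →L[ℝ] ℝ :=
  (3 * IK φ₀ h₀ p) • (ContinuousLinearMap.snd ℝ ℝ ℝ) +
    (-(3 * IKh φ₀ h₀ p)) • (ContinuousLinearMap.fst ℝ ℝ ℝ)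

def Dom : Set (ℝ × ℝ) := Ioo (-1:ℝ) 2 ×ˢ Iio (0:ℝ)

lemma isOpen_Dom : IsOpen Dom := (isOpen_Ioo).prod isOpen_Iio

section Key

variable {φ₀ h₀ : Sp → ℝ}

lemma meas_arg (c : Ctx φ₀ h₀) (p : ℝ × ℝ) : Measurable (fun x => argf φ₀ h₀ p x) := by
  unfold argf
  exact (measurable_const.sub c.mφ).sub (c.mh.const_mul p.1)

lemma cont_in_p (x : Sp) : Continuous (fun p : ℝ × ℝ => argf φ₀ h₀ p x) := by
  unfold argf
  exact (continuous_snd.sub continuous_const).sub (continuous_fst.mul continuous_const)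

lemma hder (x : Sp) (p : ℝ × ℝ) :
    HasFDerivAt (fun q => gfun (argf φ₀ h₀ q x))
      ((3 * Kfun (argf φ₀ h₀ p x)) •
        ((ContinuousLinearMap.snd ℝ ℝ ℝ) - h₀ x • (ContinuousLinearMap.fst ℝ ℝ ℝ))) p := by
  have ha : HasFDerivAt (fun q : ℝ × ℝ => argf φ₀ h₀ q x)
      ((ContinuousLinearMap.snd ℝ ℝ ℝ) - h₀ x • (ContinuousLinearMap.fst ℝ ℝ ℝ)) p := by
    unfold argf
    have h2 : HasFDerivAt (fun q : ℝ × ℝ => q.1 * h₀ x)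
        (h₀ x • ContinuousLinearMap.fst ℝ ℝ ℝ) p := (hasFDerivAt_fst).mul_const (h₀ x)
    exact ((hasFDerivAt_snd).sub_const (φ₀ x)).sub h2
  exact (hasDerivAt_gfun _).comp_hasFDerivAt p ha

lemma hopn (x : Sp) (p : ℝ × ℝ) :
    ‖(3 * Kfun (argf φ₀ h₀ p x)) •
        ((ContinuousLinearMap.snd ℝ ℝ ℝ) - h₀ x • (ContinuousLinearMap.fst ℝ ℝ ℝ))‖
      ≤ 3 * Kfun (argf φ₀ h₀ p x) * (1 + |h₀ x|) := by
  have hK := Kfun_nonneg (argf φ₀ h₀ p x)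
  refine ContinuousLinearMap.opNorm_le_bound _ (by positivity) fun q => ?_
  simp only [ContinuousLinearMap.smul_apply, ContinuousLinearMap.sub_apply,
    ContinuousLinearMap.coe_snd', ContinuousLinearMap.coe_fst', smul_eq_mul]
  have h1 : |q.1| ≤ ‖q‖ := by rw [← Real.norm_eq_abs]; exact norm_fst_le q
  have h2 : |q.2| ≤ ‖q‖ := by rw [← Real.norm_eq_abs]; exact norm_snd_le q
  rw [Real.norm_eq_abs]
  have habs : |3 * Kfun (argf φ₀ h₀ p x) * (q.2 - h₀ x * q.1)|
      = 3 * Kfun (argf φ₀ h₀ p x) * |q.2 - h₀ x * q.1| := by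
    rw [abs_mul, abs_of_nonneg (by positivity : (0:ℝ) ≤ 3 * Kfun (argf φ₀ h₀ p x))]
  rw [habs]
  have h3 : |q.2 - h₀ x * q.1| ≤ (1 + |h₀ x|) * ‖q‖ := by
    calc |q.2 - h₀ x * q.1| ≤ |q.2| + |h₀ x * q.1| := abs_sub _ _
      _ = |q.2| + |h₀ x| * |q.1| := by rw [abs_mul]
      _ ≤ ‖q‖ + |h₀ x| * ‖q‖ := by
          have := abs_nonneg (h₀ x)
          gcongr
      _ = (1 + |h₀ x|) * ‖q‖ := by ring
  calc 3 * Kfun (argf φ₀ h₀ p x) * |q.2 - h₀ x * q.1|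
      ≤ 3 * Kfun (argf φ₀ h₀ p x) * ((1 + |h₀ x|) * ‖q‖) := by gcongr
    _ = 3 * Kfun (argf φ₀ h₀ p x) * (1 + |h₀ x|) * ‖q‖ := by ring

set_option maxHeartbeats 2000000 in
lemma key (c : Ctx φ₀ h₀) {p₀ : ℝ × ℝ} (hp : p₀ ∈ Dom) :
    Integrable (fun x => gfun (argf φ₀ h₀ p₀ x)) volume ∧
    Integrable (fun x => Kfun (argf φ₀ h₀ p₀ x)) volume ∧
    Integrable (fun x => Kfun (argf φ₀ h₀ p₀ x) * h₀ x) volume ∧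
    HasFDerivAt (Ifun φ₀ h₀) (Lmap φ₀ h₀ p₀) p₀ ∧
    ContinuousAt (IK φ₀ h₀) p₀ ∧ ContinuousAt (IKh φ₀ h₀) p₀ := by
  obtain ⟨hp1, hp2⟩ := hp
  rw [mem_Ioo] at hp1
  rw [mem_Iio] at hp2
  set ε : ℝ := min (min (p₀.1 + 1) (2 - p₀.1)) (min (-p₀.2 / 2) 1) with hεdef
  have hε : 0 < ε :=
    lt_min (lt_min (by linarith) (by linarith)) (lt_min (by linarith) one_pos)
  have hball : ∀ p ∈ Metric.ball p₀ ε, |p.1| ≤ 2 ∧ p.2 ≤ p₀.2 / 2 ∧ |p.2| ≤ |p₀.2| + 1 := by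
    intro p hp
    rw [Metric.mem_ball, Prod.dist_eq, max_lt_iff, Real.dist_eq, Real.dist_eq] at hp
    obtain ⟨d1, d2⟩ := hp
    have e1 : ε ≤ p₀.1 + 1 := (min_le_left _ _).trans (min_le_left _ _)
    have e2 : ε ≤ 2 - p₀.1 := (min_le_left _ _).trans (min_le_right _ _)
    have e3 : ε ≤ -p₀.2 / 2 := (min_le_right _ _).trans (min_le_left _ _)
    have e4 : ε ≤ 1 := (min_le_right _ _).trans (min_le_right _ _)
    rw [abs_lt] at d1 d2
    refine ⟨?_, ?_, ?_⟩
    · rw [abs_le]; constructor <;> nlinarith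
    · nlinarith
    · rw [abs_le]
      rcases le_or_gt 0 p₀.2 with h | h
      · constructor <;> nlinarith [abs_of_nonneg h]
      · constructor <;> nlinarith [abs_of_neg h]
  obtain ⟨R, hR, hdec⟩ := c.decay (-p₀.2 / 8) (by linarith)
  set B : Set Sp := Metric.closedBall 0 R with hBdef
  set W : Sp → ℝ := fun x => (|p₀.2| + 3) + 1 * |φ₀ x| + 4 * |h₀ x| with hWdef
  have hW3 : ∀ x, 3 ≤ W x := by
    intro x
    have := abs_nonneg p₀.2; have := abs_nonneg (φ₀ x); have := abs_nonneg (h₀ x)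
    simp only [hWdef]; linarith
  have hWh : ∀ x, 1 + |h₀ x| ≤ W x := by
    intro x
    have := abs_nonneg p₀.2; have := abs_nonneg (φ₀ x); have := abs_nonneg (h₀ x)
    simp only [hWdef]; linarith
  have harg : ∀ p ∈ Metric.ball p₀ ε, ∀ x, max (argf φ₀ h₀ p x) 0 + 2 ≤ W x := by
    intro p hp x
    obtain ⟨b1, b2, b3⟩ := hball p hp
    have habs : argf φ₀ h₀ p x ≤ |p₀.2| + 1 + |φ₀ x| + 2 * |h₀ x| := by
      unfold argf
      have h1 : p.2 ≤ |p₀.2| + 1 := le_trans (le_abs_self _) b3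
      have h2 : -φ₀ x ≤ |φ₀ x| := neg_le_abs _
      have h3 : -(p.1 * h₀ x) ≤ 2 * |h₀ x| := by
        calc -(p.1 * h₀ x) ≤ |p.1 * h₀ x| := neg_le_abs _
          _ = |p.1| * |h₀ x| := abs_mul _ _
          _ ≤ 2 * |h₀ x| := by have := abs_nonneg (h₀ x); nlinarith
      linarith
    have hφ := abs_nonneg (φ₀ x); have hh := abs_nonneg (h₀ x); have hp2 := abs_nonneg p₀.2
    have hmax : max (argf φ₀ h₀ p x) 0 ≤ W x - 2 :=
      max_le (by simp only [hWdef]; linarith) (by simp only [hWdef]; linarith)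
    linarith
  have hgle : ∀ p ∈ Metric.ball p₀ ε, ∀ x, gfun (argf φ₀ h₀ p x) ≤ W x ^ 3 := by
    intro p hp x
    refine (gfun_le _).trans ?_
    exact pow_le_pow_left₀ (by positivity) (harg p hp x) 3
  have hKle : ∀ p ∈ Metric.ball p₀ ε, ∀ x, Kfun (argf φ₀ h₀ p x) ≤ W x ^ 2 := by
    intro p hp x
    refine (Kfun_le _).trans ?_
    exact pow_le_pow_left₀ (by positivity) (harg p hp x) 2
  have hW2le3 : ∀ x, W x ^ 2 ≤ W x ^ 3 :=
    fun x => pow_le_pow_right₀ (by linarith [hW3 x]) (by norm_num)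
  have hout : ∀ᵐ x ∂(volume : Measure Sp), ∀ p ∈ Metric.ball p₀ ε, x ∉ B →
      argf φ₀ h₀ p x < 0 := by
    filter_upwards [hdec] with x hx
    intro p hp hxB
    have hxR : R ≤ ‖x‖ := by
      by_contra hcon
      exact hxB (Metric.mem_closedBall.2 (by rw [dist_zero_right]; linarith))
    have hsmall := hx hxR
    obtain ⟨b1, b2, b3⟩ := hball p hp
    unfold argf
    have h0 := abs_nonneg (φ₀ x); have h0' := abs_nonneg (h₀ x)
    have h2 : -φ₀ x ≤ |φ₀ x| := neg_le_abs _
    have h3 : -(p.1 * h₀ x) ≤ 2 * |h₀ x| := by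
      calc -(p.1 * h₀ x) ≤ |p.1 * h₀ x| := neg_le_abs _
        _ = |p.1| * |h₀ x| := abs_mul _ _
        _ ≤ 2 * |h₀ x| := by nlinarith
    nlinarith
  set bnd : Sp → ℝ := B.indicator (fun x => W x ^ 3) with hbnddef
  have hbnd_int : Integrable bnd volume := by
    refine IntegrableOn.integrable_indicator ?_ measurableSet_closedBall
    exact c.int3 (|p₀.2| + 3) 1 4 R (by positivity) zero_le_one (by norm_num)
  have hbnd_nonneg : ∀ x, 0 ≤ bnd x := by
    intro x
    refine indicator_nonneg (fun y _ => ?_) x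
    have := hW3 y
    positivity
  have haeb : ∀ p ∈ Metric.ball p₀ ε, ∀ᵐ x ∂(volume : Measure Sp),
      ‖gfun (argf φ₀ h₀ p x)‖ ≤ bnd x ∧ ‖Kfun (argf φ₀ h₀ p x)‖ ≤ bnd x ∧
        ‖Kfun (argf φ₀ h₀ p x) * h₀ x‖ ≤ bnd x := by
    intro p hp
    filter_upwards [hout] with x hx
    rcases em (x ∈ B) with hxB | hxB
    · have hb : bnd x = W x ^ 3 := indicator_of_mem hxB _
      have hg0 := gfun_nonneg (argf φ₀ h₀ p x)
      have hK0 := Kfun_nonneg (argf φ₀ h₀ p x)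
      have hWx := hW3 x
      refine ⟨?_, ?_, ?_⟩
      · rw [Real.norm_eq_abs, abs_of_nonneg hg0, hb]; exact hgle p hp x
      · rw [Real.norm_eq_abs, abs_of_nonneg hK0, hb]
        exact (hKle p hp x).trans (hW2le3 x)
      · rw [Real.norm_eq_abs, abs_mul, abs_of_nonneg hK0, hb]
        calc Kfun (argf φ₀ h₀ p x) * |h₀ x| ≤ W x ^ 2 * W x := by
              have h1 := hKle p hp x
              have hh : |h₀ x| ≤ W x := by linarith [hWh x, abs_nonneg (h₀ x)]
              exact mul_le_mul h1 hh (abs_nonneg _) (by positivity)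
          _ = W x ^ 3 := by ring
    · have hneg := hx p hp hxB
      have hb : bnd x = 0 := indicator_of_notMem hxB _
      rw [hb, gfun_of_nonpos hneg.le, Kfun_of_nonpos hneg.le]
      norm_num
  have hint : ∀ p ∈ Metric.ball p₀ ε,
      Integrable (fun x => gfun (argf φ₀ h₀ p x)) volume ∧
      Integrable (fun x => Kfun (argf φ₀ h₀ p x)) volume ∧
      Integrable (fun x => Kfun (argf φ₀ h₀ p x) * h₀ x) volume := by
    intro p hp
    have hmg : AEStronglyMeasurable (fun x => gfun (argf φ₀ h₀ p x)) volume :=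
      (gfun_cont.measurable.comp (meas_arg c p)).aestronglyMeasurable
    have hmK : AEStronglyMeasurable (fun x => Kfun (argf φ₀ h₀ p x)) volume :=
      (Kfun_cont.measurable.comp (meas_arg c p)).aestronglyMeasurable
    have hmKh : AEStronglyMeasurable (fun x => Kfun (argf φ₀ h₀ p x) * h₀ x) volume :=
      ((Kfun_cont.measurable.comp (meas_arg c p)).mul c.mh).aestronglyMeasurable
    refine ⟨hbnd_int.mono' hmg ?_, hbnd_int.mono' hmK ?_, hbnd_int.mono' hmKh ?_⟩ <;>
    · filter_upwards [haeb p hp] with x hx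
      tauto
  have hmem : p₀ ∈ Metric.ball p₀ ε := Metric.mem_ball_self hε
  obtain ⟨hig, hiK, hiKh⟩ := hint p₀ hmem
  have hlip : ∀ᵐ x ∂(volume : Measure Sp),
      LipschitzOnWith (Real.nnabs (3 * bnd x)) (fun p => gfun (argf φ₀ h₀ p x))
        (Metric.ball p₀ ε) := by
    filter_upwards [hout] with x hx
    rcases em (x ∈ B) with hxB | hxB
    · refine (convex_ball p₀ ε).lipschitzOnWith_of_nnnorm_hasFDerivWithin_le
        (f' := fun p => (3 * Kfun (argf φ₀ h₀ p x)) •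
          ((ContinuousLinearMap.snd ℝ ℝ ℝ) - h₀ x • (ContinuousLinearMap.fst ℝ ℝ ℝ)))
        (fun p hp => (hder x p).hasFDerivWithinAt) (fun p hp => ?_)
      rw [← NNReal.coe_le_coe, coe_nnnorm, Real.coe_nnabs]
      have h1 := hopn (φ₀ := φ₀) (h₀ := h₀) x p
      have h2 : Kfun (argf φ₀ h₀ p x) * (1 + |h₀ x|) ≤ W x ^ 2 * W x :=
        mul_le_mul (hKle p hp x) (hWh x) (by positivity) (by positivity)
      have hb : bnd x = W x ^ 3 := indicator_of_mem hxB _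
      have habs : |3 * bnd x| = 3 * bnd x := abs_of_nonneg (by linarith [hbnd_nonneg x])
      rw [habs, hb]
      nlinarith [Kfun_nonneg (argf φ₀ h₀ p x)]
    · intro p hp q hq
      have hz1 : gfun (argf φ₀ h₀ p x) = 0 := gfun_of_nonpos (hx p hp hxB).le
      have hz2 : gfun (argf φ₀ h₀ q x) = 0 := gfun_of_nonpos (hx q hq hxB).le
      simp [hz1, hz2]
  have hF'meas : AEStronglyMeasurable (fun x => (3 * Kfun (argf φ₀ h₀ p₀ x)) •
      ((ContinuousLinearMap.snd ℝ ℝ ℝ) - h₀ x • (ContinuousLinearMap.fst ℝ ℝ ℝ))) volume := by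
    have hcont : Continuous (fun y : ℝ × ℝ => y.1 •
        ((ContinuousLinearMap.snd ℝ ℝ ℝ) - y.2 • (ContinuousLinearMap.fst ℝ ℝ ℝ))) :=
      continuous_fst.smul (continuous_const.sub (continuous_snd.smul continuous_const))
    have hmeas : AEStronglyMeasurable
        (fun x => ((3 * Kfun (argf φ₀ h₀ p₀ x), h₀ x) : ℝ × ℝ)) volume :=
      (((Kfun_cont.measurable.comp (meas_arg c p₀)).const_mul 3).prodMk c.mh).aestronglyMeasurable
    exact hcont.comp_aestronglyMeasurable hmeas
  have hFmeas : ∀ᶠ p in 𝓝 p₀,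
      AEStronglyMeasurable (fun x => gfun (argf φ₀ h₀ p x)) volume := by
    filter_upwards with p
    exact (gfun_cont.measurable.comp (meas_arg c p)).aestronglyMeasurable
  have hbnd3_int : Integrable (fun x => 3 * bnd x) volume := hbnd_int.const_mul 3
  have hdiff : ∀ᵐ x ∂(volume : Measure Sp), HasFDerivAt (fun p => gfun (argf φ₀ h₀ p x))
      ((3 * Kfun (argf φ₀ h₀ p₀ x)) •
        ((ContinuousLinearMap.snd ℝ ℝ ℝ) - h₀ x • (ContinuousLinearMap.fst ℝ ℝ ℝ))) p₀ :=
    ae_of_all _ fun x => hder x p₀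
  obtain ⟨hF'int, hHasF⟩ :=
    hasFDerivAt_integral_of_dominated_loc_of_lip (Metric.ball_mem_nhds p₀ hε) hFmeas hig hF'meas hlip hbnd3_int hdiff
  have hIder : HasFDerivAt (Ifun φ₀ h₀) (Lmap φ₀ h₀ p₀) p₀ := by
    have heq : (∫ x : Sp, (3 * Kfun (argf φ₀ h₀ p₀ x)) •
        ((ContinuousLinearMap.snd ℝ ℝ ℝ) - h₀ x • (ContinuousLinearMap.fst ℝ ℝ ℝ)))
        = Lmap φ₀ h₀ p₀ := by
      refine ContinuousLinearMap.ext fun q => ?_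
      rw [ContinuousLinearMap.integral_apply hF'int]
      have h1 : (fun x => ((3 * Kfun (argf φ₀ h₀ p₀ x)) •
          ((ContinuousLinearMap.snd ℝ ℝ ℝ) - h₀ x • (ContinuousLinearMap.fst ℝ ℝ ℝ))) q)
          = fun x => q.2 * (3 * Kfun (argf φ₀ h₀ p₀ x))
              - q.1 * (3 * (Kfun (argf φ₀ h₀ p₀ x) * h₀ x)) := by
        funext x
        simp only [ContinuousLinearMap.smul_apply, ContinuousLinearMap.sub_apply,
          ContinuousLinearMap.coe_snd', ContinuousLinearMap.coe_fst', smul_eq_mul]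
        ring
      rw [h1, integral_sub ((hiK.const_mul 3).const_mul q.2) ((hiKh.const_mul 3).const_mul q.1),
        integral_const_mul, integral_const_mul, integral_const_mul, integral_const_mul]
      simp only [Lmap, ContinuousLinearMap.add_apply, ContinuousLinearMap.smul_apply,
        ContinuousLinearMap.coe_snd', ContinuousLinearMap.coe_fst', smul_eq_mul, IK, IKh]
      ring
    rw [← heq]
    exact hHasF
  have hcK : ContinuousAt (IK φ₀ h₀) p₀ := by
    refine continuousAt_of_dominated ?_ ?_ hbnd_int ?_
    · filter_upwards with p
      exact (Kfun_cont.measurable.comp (meas_arg c p)).aestronglyMeasurable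
    · filter_upwards [Metric.ball_mem_nhds p₀ hε] with p hp
      filter_upwards [haeb p hp] with x hx
      exact hx.2.1
    · filter_upwards with x
      exact (Kfun_cont.comp (cont_in_p x)).continuousAt
  have hcKh : ContinuousAt (IKh φ₀ h₀) p₀ := by
    refine continuousAt_of_dominated ?_ ?_ hbnd_int ?_
    · filter_upwards with p
      exact ((Kfun_cont.measurable.comp (meas_arg c p)).mul c.mh).aestronglyMeasurable
    · filter_upwards [Metric.ball_mem_nhds p₀ hε] with p hp
      filter_upwards [haeb p hp] with x hx
      exact hx.2.2
    · filter_upwards with x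
      exact ((Kfun_cont.comp (cont_in_p x)).mul continuous_const).continuousAt
  exact ⟨hig, hiK, hiKh, hIder, hcK, hcKh⟩

end Key
end Stmt7Aux


namespace Stmt7Aux
section Char

variable {φ₀ h₀ : Sp → ℝ}

def psi (φ₀ h₀ : Sp → ℝ) (l : ℝ) : Sp → ℝ := fun x => φ₀ x + l * h₀ x

lemma psi_meas (c : Ctx φ₀ h₀) (l : ℝ) : Measurable (psi φ₀ h₀ l) :=
  c.mφ.add (c.mh.const_mul l)

lemma arg_eq (l e : ℝ) (x : Sp) : e - psi φ₀ h₀ l x = argf φ₀ h₀ (l, e) x := by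
  unfold psi argf; ring

lemma aJacE_eq' (c : Ctx φ₀ h₀) (l e : ℝ) :
    aJacE (psi φ₀ h₀ l) e = cB * ∫⁻ x : Sp, ENNReal.ofReal (gfun (argf φ₀ h₀ (l, e) x)) := by
  rw [aJacE_eq (psi_meas c l) e]
  congr 1
  exact lintegral_congr fun x => by rw [arg_eq]

lemma aJacE_fin (c : Ctx φ₀ h₀) {l e : ℝ} (hl : (l, e) ∈ Dom) :
    aJacE (psi φ₀ h₀ l) e ≠ ∞ := by
  have hint := (key c hl).1
  rw [aJacE_eq' c, ← ofReal_integral_eq_lintegral_ofReal hint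
    (ae_of_all _ fun x => gfun_nonneg _)]
  exact ENNReal.mul_ne_top cB_ne_top ENNReal.ofReal_ne_top

lemma aJac_eq' (c : Ctx φ₀ h₀) {l e : ℝ} (hl : (l, e) ∈ Dom) :
    aJac (psi φ₀ h₀ l) e = cB.toReal * Ifun φ₀ h₀ (l, e) := by
  have hint := (key c hl).1
  rw [aJac, aJacE_eq' c, ← ofReal_integral_eq_lintegral_ofReal hint
    (ae_of_all _ fun x => gfun_nonneg _), ENNReal.toReal_mul,
    ENNReal.toReal_ofReal (integral_nonneg fun x => gfun_nonneg _)]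
  rfl

lemma aJacE_mono (u : Sp → ℝ) : Monotone (aJacE u) := fun e e' h =>
  measure_mono (fun z hz => lt_of_lt_of_le hz h)

lemma lint_inf {c₁ : ℝ} (hc : 0 < c₁) :
    ∫⁻ x : Sp, ENNReal.ofReal (c₁ / (1 + ‖x‖) ^ 2) ∂volume = ∞ := by
  by_contra hne
  set J := ∫⁻ x : Sp, ENNReal.ofReal (c₁ / (1 + ‖x‖) ^ 2) ∂volume with hJ
  have hV1pos : 0 < cB := cB_pos
  have hV1top : cB ≠ ∞ := cB_ne_top
  have hV1Rpos : 0 < cB.toReal := cB_toReal_pos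
  have hkey : ∀ n : ℕ, ENNReal.ofReal (c₁ * ((n:ℝ) + 1) / 4) * cB ≤ J := by
    intro n
    have h1 : ∫⁻ x : Sp in Metric.closedBall 0 ((n:ℝ) + 1),
        ENNReal.ofReal (c₁ / (1 + ‖x‖) ^ 2) ∂volume ≤ J := setLIntegral_le_lintegral _ _
    have h2 : ENNReal.ofReal (c₁ / ((n:ℝ) + 2) ^ 2) * volume (Metric.closedBall (0:Sp) ((n:ℝ)+1))
        ≤ ∫⁻ x : Sp in Metric.closedBall 0 ((n:ℝ) + 1),
          ENNReal.ofReal (c₁ / (1 + ‖x‖) ^ 2) ∂volume := by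
      rw [← setLIntegral_const]
      refine setLIntegral_mono' measurableSet_closedBall fun x hx => ?_
      refine ENNReal.ofReal_le_ofReal ?_
      rw [Metric.mem_closedBall, dist_zero_right] at hx
      have h3 : (0:ℝ) < 1 + ‖x‖ := by positivity
      rw [div_le_div_iff₀ (by positivity) (by positivity)]
      have hb : 1 + ‖x‖ ≤ (n:ℝ) + 2 := by linarith
      have hb2 : (1+‖x‖)^2 ≤ ((n:ℝ)+2)^2 := by nlinarith [norm_nonneg x]
      nlinarith [mul_le_mul_of_nonneg_left hb2 hc.le]
    have h6 : volume (Metric.closedBall (0:Sp) ((n:ℝ)+1))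
        = ENNReal.ofReal (((n:ℝ)+1)^3) * cB := by
      rw [Measure.addHaar_closedBall (μ := volume) (0:Sp) (by positivity), finrank_Sp]
      rfl
    have h7 : ENNReal.ofReal (c₁ * ((n:ℝ)+1)/4)
        ≤ ENNReal.ofReal (c₁/((n:ℝ)+2)^2) * ENNReal.ofReal (((n:ℝ)+1)^3) := by
      rw [← ENNReal.ofReal_mul (by positivity)]
      refine ENNReal.ofReal_le_ofReal ?_
      rw [div_mul_eq_mul_div, div_le_div_iff₀ (by norm_num) (by positivity)]
      have hnn : (0:ℝ) ≤ (n:ℝ) := Nat.cast_nonneg n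
      have key2 : ((n:ℝ)+2)^2 ≤ 4*((n:ℝ)+1)^2 := by nlinarith
      nlinarith [mul_le_mul_of_nonneg_left key2
        (mul_nonneg hc.le (by linarith : (0:ℝ) ≤ (n:ℝ)+1))]
    calc ENNReal.ofReal (c₁ * ((n:ℝ)+1)/4) * cB
        ≤ (ENNReal.ofReal (c₁/((n:ℝ)+2)^2) * ENNReal.ofReal (((n:ℝ)+1)^3)) * cB :=
          mul_le_mul_left h7 _
      _ = ENNReal.ofReal (c₁/((n:ℝ)+2)^2) * volume (Metric.closedBall (0:Sp) ((n:ℝ)+1)) := by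
          rw [h6, mul_assoc]
      _ ≤ _ := le_trans h2 h1
  obtain ⟨n, hn⟩ := exists_nat_gt (4 * J.toReal / (c₁ * cB.toReal))
  have h8 := hkey n
  have h9 : c₁ * ((n:ℝ)+1)/4 * cB.toReal ≤ J.toReal := by
    have := ENNReal.toReal_mono hne h8
    rwa [ENNReal.toReal_mul, ENNReal.toReal_ofReal (by positivity)] at this
  have h10 : 4 * J.toReal / (c₁ * cB.toReal) < (n:ℝ) + 1 := by linarith
  rw [div_lt_iff₀ (by positivity)] at h10
  nlinarith

lemma exists_big (c : Ctx φ₀ h₀) {m l : ℝ} (hm : 0 < m)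
    (hlow : ∀ᵐ x ∂(volume : Measure Sp), psi φ₀ h₀ l x ≤ -(m / (1 + ‖x‖)))
    {S : ℝ≥0∞} (hS : S ≠ ∞) :
    ∃ e : ℝ, e < 0 ∧ S ≤ aJacE (psi φ₀ h₀ l) e := by
  set f : ℕ → Sp → ℝ≥0∞ :=
    fun n x => ENNReal.ofReal (gfun (-(1/((n:ℝ)+1)) - psi φ₀ h₀ l x)) with hf
  have hmono : ∀ x, Monotone fun n => f n x := by
    intro x n n' hnn
    refine ENNReal.ofReal_le_ofReal (gfun_mono ?_)
    have h1 : (0:ℝ) < (n:ℝ) + 1 := by positivity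
    have h2 : ((n:ℝ)+1) ≤ ((n':ℝ)+1) := by
      have : (n:ℝ) ≤ (n':ℝ) := Nat.cast_le.2 hnn
      linarith
    have := one_div_le_one_div_of_le h1 h2
    linarith
  have hlim : ∀ x, Tendsto (fun n => f n x) atTop
      (𝓝 (ENNReal.ofReal (gfun (0 - psi φ₀ h₀ l x)))) := by
    intro x
    have h0 : Tendsto (fun n : ℕ => 1/((n:ℝ)+1)) atTop (𝓝 0) :=
      tendsto_one_div_add_atTop_nhds_zero_nat
    have h1 : Tendsto (fun n : ℕ => -(1/((n:ℝ)+1)) - psi φ₀ h₀ l x) atTop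
        (𝓝 (0 - psi φ₀ h₀ l x)) := by
      have := (h0.neg).sub (tendsto_const_nhds (x := psi φ₀ h₀ l x))
      simpa using this
    exact (ENNReal.continuous_ofReal.tendsto _).comp ((gfun_cont.tendsto _).comp h1)
  have hsup : ∀ x, (⨆ n, f n x) = ENNReal.ofReal (gfun (0 - psi φ₀ h₀ l x)) := fun x =>
    tendsto_nhds_unique (tendsto_atTop_iSup (hmono x)) (hlim x)
  have hmeas : ∀ n, AEMeasurable (f n) (volume : Measure Sp) := fun n =>
    (ENNReal.measurable_ofReal.comp (gfun_cont.measurable.comp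
      (measurable_const.sub (psi_meas c l)))).aemeasurable
  have hswap : (⨆ n, ∫⁻ x, f n x ∂volume) = ∫⁻ x, ⨆ n, f n x ∂volume :=
    (lintegral_iSup' hmeas (ae_of_all _ hmono)).symm
  have hbig : (∫⁻ x, ⨆ n, f n x ∂volume) = ∞ := by
    rw [eq_top_iff, ← lint_inf (show (0:ℝ) < min 1 (4 * m^2) by positivity)]
    refine lintegral_mono_ae ?_
    filter_upwards [hlow] with x hx
    rw [hsup x]
    refine ENNReal.ofReal_le_ofReal ?_
    have hr : (0:ℝ) < 1 + ‖x‖ := by positivity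
    have ht : 0 < m / (1 + ‖x‖) := by positivity
    have h1 : min 1 (4 * m^2) / (1 + ‖x‖)^2 ≤ min 1 (4 * (m / (1 + ‖x‖))^2) := by
      rcases le_or_gt (4 * (m / (1 + ‖x‖))^2) 1 with h | h
      · rw [min_eq_right h]
        have h2 : min 1 (4*m^2) ≤ 4 * m^2 := min_le_right _ _
        rw [div_le_iff₀ (by positivity)]
        have h4 : 4 * (m / (1 + ‖x‖))^2 * (1 + ‖x‖)^2 = 4 * m^2 := by
          field_simp
        linarith
      · rw [min_eq_left h.le]
        have h5 : min 1 (4*m^2) ≤ 1 := min_le_left _ _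
        rw [div_le_one (by positivity)]
        nlinarith [norm_nonneg x]
    refine h1.trans ?_
    refine (gfun_lb ht.le).trans (gfun_mono ?_)
    linarith
  have htop : (⨆ n, ∫⁻ x, f n x ∂volume) = ∞ := by rw [hswap, hbig]
  have hScB : S / cB < ⊤ := ENNReal.div_lt_top hS cB_pos.ne'
  obtain ⟨n, hn⟩ := iSup_eq_top.1 htop (S / cB) hScB
  have hpos : (0:ℝ) < 1/((n:ℝ)+1) := by positivity
  refine ⟨-(1/((n:ℝ)+1)), neg_lt_zero.2 hpos, ?_⟩
  calc S = cB * (S / cB) := (ENNReal.mul_div_cancel cB_pos.ne' cB_ne_top).symm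
    _ ≤ cB * ∫⁻ x, f n x ∂volume := mul_le_mul_right hn.le _
    _ = aJacE (psi φ₀ h₀ l) (-(1/((n:ℝ)+1))) := by
        rw [aJacE_eq' c]
        congr 1
        exact lintegral_congr fun x => by rw [← arg_eq]

lemma exists_small (c : Ctx φ₀ h₀) {l : ℝ} (hl : l ∈ Ioo (-1:ℝ) 2) {s : ℝ} (hs : 0 < s) :
    ∃ e : ℝ, e < 0 ∧ aJac (psi φ₀ h₀ l) e < s := by
  have hDom1 : ((l, (-1:ℝ)) : ℝ × ℝ) ∈ Dom := ⟨hl, by norm_num⟩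
  have hbint := (key c hDom1).1
  have hT : Tendsto (fun n : ℕ => Ifun φ₀ h₀ (l, -1 - (n:ℝ))) atTop (𝓝 0) := by
    have h0 : (0:ℝ) = ∫ _x : Sp, (0:ℝ) ∂volume := by simp
    rw [h0]
    simp only [Ifun]
    refine tendsto_integral_of_dominated_convergence (fun x => gfun (argf φ₀ h₀ (l, -1) x))
      (fun n => ?_) hbint (fun n => ?_) ?_
    · exact (gfun_cont.measurable.comp (meas_arg c (l, -1 - (n:ℝ)))).aestronglyMeasurable
    · refine ae_of_all _ fun x => ?_
      rw [Real.norm_eq_abs, abs_of_nonneg (gfun_nonneg _)]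
      refine gfun_mono ?_
      unfold argf
      simp only
      have : (0:ℝ) ≤ (n:ℝ) := Nat.cast_nonneg n
      linarith
    · refine ae_of_all _ fun x => ?_
      have hev : (fun n : ℕ => gfun (argf φ₀ h₀ (l, -1 - (n:ℝ)) x)) =ᶠ[atTop]
          (fun _ => (0:ℝ)) := by
        rw [EventuallyEq, eventually_atTop]
        obtain ⟨N, hN⟩ := exists_nat_gt (-1 - φ₀ x - l * h₀ x)
        refine ⟨N, fun n hn => ?_⟩
        refine gfun_of_nonpos ?_
        unfold argf
        simp only
        have : (N:ℝ) ≤ (n:ℝ) := Nat.cast_le.2 hn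
        linarith
      exact (tendsto_congr' hev).2 tendsto_const_nhds
  have hs' : 0 < s / cB.toReal := div_pos hs cB_toReal_pos
  obtain ⟨n, hn⟩ := (hT.eventually (gt_mem_nhds hs')).exists
  have hn0 : (0:ℝ) ≤ (n:ℝ) := Nat.cast_nonneg n
  have hDomn : ((l, -1 - (n:ℝ)) : ℝ × ℝ) ∈ Dom := ⟨hl, by simp only [mem_Iio]; linarith⟩
  refine ⟨-1 - (n:ℝ), by linarith, ?_⟩
  rw [aJac_eq' c hDomn]
  calc cB.toReal * Ifun φ₀ h₀ (l, -1 - (n:ℝ)) < cB.toReal * (s / cB.toReal) :=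
        mul_lt_mul_of_pos_left hn cB_toReal_pos
    _ = s := by rw [mul_comm, div_mul_cancel₀ _ cB_toReal_pos.ne']

lemma Kfun_ne_iff {t : ℝ} : Kfun t ≠ 0 ↔ 0 < t := by
  constructor
  · intro h
    by_contra hc
    exact h (Kfun_of_nonpos (not_lt.1 hc))
  · exact fun h => (Kfun_pos h).ne'

lemma strictI (c : Ctx φ₀ h₀) {l e1 e2 : ℝ} (h1 : (l, e1) ∈ Dom) (h2 : (l, e2) ∈ Dom)
    (he : e1 < e2) (hpos : 0 < Ifun φ₀ h₀ (l, e1)) :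
    Ifun φ₀ h₀ (l, e1) < Ifun φ₀ h₀ (l, e2) := by
  have hi1 := (key c h1).1
  have hi2 := (key c h2).1
  have hargle : ∀ x, argf φ₀ h₀ (l, e1) x ≤ argf φ₀ h₀ (l, e2) x := by
    intro x; unfold argf; simp only; linarith
  have hmono : ∀ x, gfun (argf φ₀ h₀ (l, e1) x) ≤ gfun (argf φ₀ h₀ (l, e2) x) :=
    fun x => gfun_mono (hargle x)
  have hsupp : 0 < volume (Function.support fun x => gfun (argf φ₀ h₀ (l, e1) x)) :=
    (integral_pos_iff_support_of_nonneg_ae (ae_of_all _ fun x => gfun_nonneg _) hi1).1 hpos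
  have hsub : (Function.support fun x => gfun (argf φ₀ h₀ (l, e1) x)) ⊆
      Function.support fun x => gfun (argf φ₀ h₀ (l, e2) x) - gfun (argf φ₀ h₀ (l, e1) x) := by
    intro x hx
    have hpos1 : 0 < argf φ₀ h₀ (l, e1) x := gfun_ne_iff.1 hx
    have hlt : gfun (argf φ₀ h₀ (l, e1) x) < gfun (argf φ₀ h₀ (l, e2) x) :=
      gfun_strict hpos1 (by unfold argf; simp only; linarith)
    simp only [Function.mem_support]
    exact sub_ne_zero_of_ne hlt.ne'
  have hdiffpos : 0 < ∫ x : Sp,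
      (gfun (argf φ₀ h₀ (l, e2) x) - gfun (argf φ₀ h₀ (l, e1) x)) ∂volume := by
    refine (integral_pos_iff_support_of_nonneg_ae
      (ae_of_all _ fun x => sub_nonneg.2 (hmono x)) (hi2.sub hi1)).2 ?_
    exact lt_of_lt_of_le hsupp (measure_mono hsub)
  rw [integral_sub hi2 hi1] at hdiffpos
  unfold Ifun
  linarith

lemma IK_pos (c : Ctx φ₀ h₀) {l e : ℝ} (h : (l, e) ∈ Dom) (hpos : 0 < Ifun φ₀ h₀ (l, e)) :
    0 < IK φ₀ h₀ (l, e) := by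
  have hiK := (key c h).2.1
  have hig := (key c h).1
  have hsupp : 0 < volume (Function.support fun x => gfun (argf φ₀ h₀ (l, e) x)) :=
    (integral_pos_iff_support_of_nonneg_ae (ae_of_all _ fun x => gfun_nonneg _) hig).1 hpos
  have hseteq : (Function.support fun x => gfun (argf φ₀ h₀ (l, e) x)) =
      Function.support fun x => Kfun (argf φ₀ h₀ (l, e) x) := by
    ext x
    simp only [Function.mem_support]
    rw [gfun_ne_iff, Kfun_ne_iff]
  refine (integral_pos_iff_support_of_nonneg_ae (ae_of_all _ fun x => Kfun_nonneg _) hiK).2 ?_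
  rw [← hseteq]
  exact hsupp

lemma char (c : Ctx φ₀ h₀) {m : ℝ} (hm : 0 < m) {l : ℝ} (hl : l ∈ Icc (0:ℝ) 1)
    (hlow : ∀ᵐ x ∂(volume : Measure Sp), psi φ₀ h₀ l x ≤ -(m / (1 + ‖x‖)))
    {s : ℝ} (hs : 0 < s) :
    aJacInv (psi φ₀ h₀ l) s < 0 ∧
    cB.toReal * Ifun φ₀ h₀ (l, aJacInv (psi φ₀ h₀ l) s) = s ∧
    (∀ e, e < 0 → cB.toReal * Ifun φ₀ h₀ (l, e) = s → e = aJacInv (psi φ₀ h₀ l) s) := by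
  have hl' : l ∈ Ioo (-1:ℝ) 2 := ⟨by linarith [hl.1], by linarith [hl.2]⟩
  have hDom : ∀ {e : ℝ}, e < 0 → ((l, e) : ℝ × ℝ) ∈ Dom := fun {e} he => ⟨hl', he⟩
  obtain ⟨e₂, he₂0, he₂⟩ := exists_small c hl' hs
  obtain ⟨e₁, he₁0, he₁⟩ := exists_big c hm hlow (S := ENNReal.ofReal s) ENNReal.ofReal_ne_top
  have hfin : ∀ {e : ℝ}, e < 0 → aJacE (psi φ₀ h₀ l) e ≠ ∞ :=
    fun {e} he => aJacE_fin c (hDom he)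
  have hs_le_e₁ : s ≤ aJac (psi φ₀ h₀ l) e₁ := by
    have := ENNReal.toReal_mono (hfin he₁0) he₁
    rwa [ENNReal.toReal_ofReal hs.le] at this
  have haJac_mono : ∀ {e e' : ℝ}, e' < 0 → e ≤ e' →
      aJac (psi φ₀ h₀ l) e ≤ aJac (psi φ₀ h₀ l) e' := by
    intro e e' he' hee
    exact ENNReal.toReal_mono (hfin he') (aJacE_mono _ hee)
  set S := {e : ℝ | e < 0 ∧ aJac (psi φ₀ h₀ l) e < s} with hSdef
  have hSne : S.Nonempty := ⟨e₂, he₂0, he₂⟩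
  have hub : ∀ e ∈ S, e ≤ e₁ := by
    intro e he
    by_contra hcon
    push_neg at hcon
    have := haJac_mono he.1 hcon.le
    linarith [he.2]
  have hSbdd : BddAbove S := ⟨e₁, hub⟩
  rw [show aJacInv (psi φ₀ h₀ l) s = sSup S from rfl]
  set E := sSup S with hE
  have hE_lt : E < 0 := lt_of_le_of_lt (csSup_le hSne hub) he₁0
  have hgaJac : ∀ {e : ℝ}, e < 0 → aJac (psi φ₀ h₀ l) e = cB.toReal * Ifun φ₀ h₀ (l, e) :=
    fun {e} he => aJac_eq' c (hDom he)
  have hgcont : ContinuousAt (fun e => cB.toReal * Ifun φ₀ h₀ (l, e)) E := by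
    have h1 := ((key c (hDom hE_lt)).2.2.2.1).continuousAt
    have h2 : ContinuousAt (fun e' : ℝ => ((l, e') : ℝ × ℝ)) E :=
      (continuous_const.prodMk continuous_id).continuousAt
    exact continuousAt_const.mul (h1.comp h2)
  have hmemS : ∀ e, e < E → e ∈ S := by
    intro e he
    obtain ⟨e', he'S, hee'⟩ := exists_lt_of_lt_csSup hSne he
    exact ⟨lt_trans hee' he'S.1, lt_of_le_of_lt (haJac_mono he'S.1 hee'.le) he'S.2⟩
  have hle : cB.toReal * Ifun φ₀ h₀ (l, E) ≤ s := by
    have htend : Tendsto (fun e => cB.toReal * Ifun φ₀ h₀ (l, e)) (𝓝[<] E)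
        (𝓝 (cB.toReal * Ifun φ₀ h₀ (l, E))) := hgcont.tendsto.mono_left nhdsWithin_le_nhds
    refine le_of_tendsto htend ?_
    filter_upwards [self_mem_nhdsWithin] with e he
    have heS := hmemS e he
    rw [← hgaJac heS.1]
    exact heS.2.le
  have hge : s ≤ cB.toReal * Ifun φ₀ h₀ (l, E) := by
    have htend : Tendsto (fun e => cB.toReal * Ifun φ₀ h₀ (l, e)) (𝓝[>] E)
        (𝓝 (cB.toReal * Ifun φ₀ h₀ (l, E))) := hgcont.tendsto.mono_left nhdsWithin_le_nhds
    refine ge_of_tendsto htend ?_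
    filter_upwards [Ioo_mem_nhdsGT_of_mem (show E ∈ Ico E 0 from ⟨le_rfl, hE_lt⟩)] with e he
    have heNS : e ∉ S := fun heS => absurd (le_csSup hSbdd heS) (not_le.2 he.1)
    have hnot : ¬ aJac (psi φ₀ h₀ l) e < s := fun hc => heNS ⟨he.2, hc⟩
    rw [← hgaJac he.2]
    linarith [not_lt.1 hnot]
  have hgE : cB.toReal * Ifun φ₀ h₀ (l, E) = s := le_antisymm hle hge
  refine ⟨hE_lt, hgE, ?_⟩
  intro e he0 hge'
  by_contra hne
  have hIeq : Ifun φ₀ h₀ (l, e) = Ifun φ₀ h₀ (l, E) :=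
    mul_left_cancel₀ cB_toReal_pos.ne' (hge'.trans hgE.symm)
  rcases lt_or_gt_of_ne hne with hlt | hgt
  · have hpos : 0 < Ifun φ₀ h₀ (l, e) := by nlinarith [cB_toReal_pos]
    have hstr := strictI c (hDom he0) (hDom hE_lt) hlt hpos
    linarith
  · have hposE : 0 < Ifun φ₀ h₀ (l, E) := by nlinarith [cB_toReal_pos]
    have hstr := strictI c (hDom hE_lt) (hDom he0) hgt hposE
    linarith

end Char
end Stmt7Aux


namespace Stmt7Aux
section Main

variable {φ₀ h₀ : Sp → ℝ}

def Efun (φ₀ h₀ : Sp → ℝ) (s l : ℝ) : ℝ := aJacInv (psi φ₀ h₀ l) s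

set_option maxHeartbeats 1000000 in
lemma main_deriv (c : Ctx φ₀ h₀) {m : ℝ} (hm : 0 < m)
    (hlow : ∀ᵐ x ∂(volume : Measure Sp), ∀ l : ℝ, 0 ≤ l → l ≤ 1 →
      psi φ₀ h₀ l x ≤ -(m / (1 + ‖x‖)))
    {s : ℝ} (hs : 0 < s) {l₀ : ℝ} (hl₀ : l₀ ∈ Icc (0:ℝ) 1) :
    ((l₀, Efun φ₀ h₀ s l₀) ∈ Dom) ∧ 0 < IK φ₀ h₀ (l₀, Efun φ₀ h₀ s l₀) ∧
    HasDerivWithinAt (Efun φ₀ h₀ s)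
      (IKh φ₀ h₀ (l₀, Efun φ₀ h₀ s l₀) / IK φ₀ h₀ (l₀, Efun φ₀ h₀ s l₀))
      (Icc (0:ℝ) 1) l₀ := by
  have hlow' : ∀ l : ℝ, l ∈ Icc (0:ℝ) 1 → (∀ᵐ x ∂(volume : Measure Sp),
      psi φ₀ h₀ l x ≤ -(m / (1 + ‖x‖))) := by
    intro l hl
    filter_upwards [hlow] with x hx
    exact hx l hl.1 hl.2
  obtain ⟨hE0, hgE, _⟩ := char c hm hl₀ (hlow' l₀ hl₀) hs
  set E₀ : ℝ := Efun φ₀ h₀ s l₀ with hE₀def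
  set p₀ : ℝ × ℝ := (l₀, E₀) with hp₀def
  have hp₀Dom : p₀ ∈ Dom := ⟨⟨by linarith [hl₀.1], by linarith [hl₀.2]⟩, hE0⟩
  set s' : ℝ := s / cB.toReal with hs'def
  have hs'pos : 0 < s' := div_pos hs cB_toReal_pos
  have hIp₀ : Ifun φ₀ h₀ p₀ = s' := by
    rw [hs'def, eq_div_iff cB_toReal_pos.ne', mul_comm]
    exact hgE
  have hIKpos : 0 < IK φ₀ h₀ p₀ := IK_pos c hp₀Dom (by rw [hIp₀]; exact hs'pos)
  -- strict differentiability of the map Φm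
  have hkey₀ := key c hp₀Dom
  have hLcont : ContinuousAt (Lmap φ₀ h₀) p₀ := by
    have h1 : ContinuousAt (fun p => (3 * IK φ₀ h₀ p) •
        (ContinuousLinearMap.snd ℝ ℝ ℝ)) p₀ :=
      (continuousAt_const.mul hkey₀.2.2.2.2.1).smul continuousAt_const
    have h2 : ContinuousAt (fun p => (-(3 * IKh φ₀ h₀ p)) •
        (ContinuousLinearMap.fst ℝ ℝ ℝ)) p₀ :=
      ((continuousAt_const.mul hkey₀.2.2.2.2.2).neg).smul continuousAt_const
    exact h1.add h2
  have hev : ∀ᶠ p in 𝓝 p₀, HasFDerivAt (Ifun φ₀ h₀) (Lmap φ₀ h₀ p) p := by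
    filter_upwards [isOpen_Dom.mem_nhds hp₀Dom] with p hp
    exact (key c hp).2.2.2.1
  have hstrict : HasStrictFDerivAt (Ifun φ₀ h₀) (Lmap φ₀ h₀ p₀) p₀ :=
    hasStrictFDerivAt_of_hasFDerivAt_of_continuousAt hev hLcont
  set Φm : ℝ × ℝ → ℝ × ℝ := fun p => (p.1, Ifun φ₀ h₀ p) with hΦmdef
  set b : ℝ := 3 * IK φ₀ h₀ p₀ with hbdef
  set a : ℝ := -(3 * IKh φ₀ h₀ p₀) with hadef
  have hb : b ≠ 0 := by positivity
  set T : ℝ × ℝ →L[ℝ] ℝ × ℝ :=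
    (ContinuousLinearMap.fst ℝ ℝ ℝ).prod (Lmap φ₀ h₀ p₀) with hTdef
  have hTapp : ∀ p : ℝ × ℝ, T p = (p.1, b * p.2 + a * p.1) := by
    intro p
    simp only [hTdef, Lmap, ContinuousLinearMap.prod_apply, ContinuousLinearMap.add_apply,
      ContinuousLinearMap.smul_apply, ContinuousLinearMap.coe_snd', ContinuousLinearMap.coe_fst',
      smul_eq_mul, hbdef, hadef]
  set Tinv : ℝ × ℝ →L[ℝ] ℝ × ℝ :=
    (ContinuousLinearMap.fst ℝ ℝ ℝ).prod
      (b⁻¹ • (ContinuousLinearMap.snd ℝ ℝ ℝ) + (-(a/b)) • (ContinuousLinearMap.fst ℝ ℝ ℝ))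
    with hTinvdef
  have hTinvapp : ∀ p : ℝ × ℝ, Tinv p = (p.1, b⁻¹ * p.2 + (-(a/b)) * p.1) := by
    intro p
    simp only [hTinvdef, ContinuousLinearMap.prod_apply, ContinuousLinearMap.add_apply,
      ContinuousLinearMap.smul_apply, ContinuousLinearMap.coe_snd', ContinuousLinearMap.coe_fst',
      smul_eq_mul]
  have hleft : Function.LeftInverse Tinv T := by
    intro p
    rw [hTapp, hTinvapp]
    refine Prod.ext rfl ?_
    simp only
    field_simp
    ring
  have hright : Function.RightInverse Tinv T := by
    intro p
    rw [hTinvapp, hTapp]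
    refine Prod.ext rfl ?_
    simp only
    field_simp
    ring
  set Teq : (ℝ × ℝ) ≃L[ℝ] ℝ × ℝ := ContinuousLinearEquiv.equivOfInverse T Tinv hleft hright
    with hTeqdef
  have hΦ : HasStrictFDerivAt Φm (Teq : (ℝ × ℝ) →L[ℝ] ℝ × ℝ) p₀ := by
    have h1 : HasStrictFDerivAt Φm T p₀ := by
      rw [hΦmdef, hTdef]
      exact hasStrictFDerivAt_fst.prodMk hstrict
    exact h1
  set V : ℝ × ℝ → ℝ × ℝ := hΦ.localInverse Φm _ p₀ with hVdef
  have hΦp₀ : Φm p₀ = (l₀, s') := by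
    simp only [hΦmdef, hIp₀, hp₀def]
    exact congrArg (Prod.mk l₀) hIp₀
  have hVd : HasStrictFDerivAt V (Teq.symm : (ℝ × ℝ) →L[ℝ] ℝ × ℝ) (Φm p₀) :=
    hΦ.to_localInverse
  have hVp₀ : V (Φm p₀) = p₀ := hΦ.localInverse_apply_image
  have hri : ∀ᶠ y in 𝓝 (Φm p₀), Φm (V y) = y := hΦ.eventually_right_inverse
  set ι : ℝ → ℝ × ℝ := fun l => (l, s') with hιdef
  set η : ℝ → ℝ := fun l => (V (ι l)).2 with hηdef
  have hιl₀ : ι l₀ = Φm p₀ := by rw [hΦp₀]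
  have hιd : HasFDerivAt ι ((ContinuousLinearMap.id ℝ ℝ).prod 0) l₀ :=
    (hasFDerivAt_id l₀).prodMk (hasFDerivAt_const s' l₀)
  have hVd' : HasFDerivAt V (Teq.symm : (ℝ × ℝ) →L[ℝ] ℝ × ℝ) (ι l₀) := by
    rw [hιl₀]
    exact hVd.hasFDerivAt
  have hηd : HasFDerivAt η ((ContinuousLinearMap.snd ℝ ℝ ℝ).comp
      (((Teq.symm : (ℝ × ℝ) →L[ℝ] ℝ × ℝ)).comp ((ContinuousLinearMap.id ℝ ℝ).prod 0))) l₀ :=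
    (ContinuousLinearMap.snd ℝ ℝ ℝ).hasFDerivAt.comp l₀ (hVd'.comp l₀ hιd)
  have hηD : HasDerivAt η ((Teq.symm ((1:ℝ), (0:ℝ))).2) l₀ := by
    have := hηd.hasDerivAt
    simpa using this
  have hsymm : Teq.symm ((1:ℝ), (0:ℝ)) = ((1:ℝ), -(a/b)) := by
    rw [ContinuousLinearEquiv.symm_apply_eq]
    have : Teq ((1:ℝ), -(a/b)) = T ((1:ℝ), -(a/b)) := rfl
    rw [this, hTapp]
    refine Prod.ext rfl ?_
    simp only
    field_simp
    ring
  have hval : (Teq.symm ((1:ℝ), (0:ℝ))).2 = IKh φ₀ h₀ p₀ / IK φ₀ h₀ p₀ := by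
    rw [hsymm]
    simp only
    rw [hadef, hbdef]
    rw [neg_div, neg_neg, mul_div_mul_left _ _ (by norm_num : (3:ℝ) ≠ 0)]
  -- eventual identification of η with Efun on Icc
  have hVcont : ContinuousAt V (Φm p₀) := hVd.continuousAt
  have htendι : Tendsto ι (𝓝 l₀) (𝓝 (Φm p₀)) := by
    rw [← hιl₀]
    exact hιd.continuousAt.tendsto
  have htendVι : Tendsto (fun l => V (ι l)) (𝓝 l₀) (𝓝 p₀) := by
    rw [← hVp₀]
    exact hVcont.tendsto.comp htendι
  have hevDom : ∀ᶠ l in 𝓝 l₀, V (ι l) ∈ Dom := htendVι.eventually (isOpen_Dom.eventually_mem hp₀Dom)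
  have hri' : ∀ᶠ l in 𝓝 l₀, Φm (V (ι l)) = ι l := htendι.eventually hri
  have hηl₀ : η l₀ = E₀ := by
    rw [hηdef]
    simp only
    rw [hιl₀, hVp₀]
  have heq : ∀ᶠ l in 𝓝 l₀, l ∈ Icc (0:ℝ) 1 → η l = Efun φ₀ h₀ s l := by
    filter_upwards [hevDom, hri'] with l h1 h2 hlIcc
    have hfst : (V (ι l)).1 = l := by
      have := congrArg Prod.fst h2
      simpa [hΦmdef, hιdef] using this
    have hIl : Ifun φ₀ h₀ (V (ι l)) = s' := by
      have := congrArg Prod.snd h2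
      simpa [hΦmdef, hιdef] using this
    have hpair : V (ι l) = (l, η l) := by
      rw [hηdef]
      exact Prod.ext hfst rfl
    have hneg : η l < 0 := by
      have := h1.2
      rw [hpair] at this
      exact this
    obtain ⟨_, _, huniq_l⟩ := char c hm hlIcc (hlow' l hlIcc) hs
    refine huniq_l (η l) hneg ?_
    have hIl' : Ifun φ₀ h₀ (l, η l) = s' := by rw [← hpair]; exact hIl
    rw [hIl', hs'def, mul_comm, div_mul_cancel₀ _ cB_toReal_pos.ne']
  refine ⟨hp₀Dom, hIKpos, ?_⟩
  have hd : HasDerivWithinAt η (IKh φ₀ h₀ p₀ / IK φ₀ h₀ p₀) (Icc (0:ℝ) 1) l₀ := by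
    rw [← hval]
    exact hηD.hasDerivWithinAt
  refine hd.congr_of_eventuallyEq ?_ ?_
  · filter_upwards [heq.filter_mono nhdsWithin_le_nhds, self_mem_nhdsWithin] with l h1 h2
    exact (h1 h2).symm
  · rw [hηl₀]

end Main
end Stmt7Aux


namespace Stmt7Aux

lemma exp_aux1 : (1 : ℝ≥0∞) / ((3:ℝ≥0∞)/2) = 1/3 + 1/3 := by
  rw [ENNReal.div_add_div_same, one_div,
    ENNReal.inv_div (Or.inr (by norm_num)) (Or.inr (by norm_num))]
  norm_num

lemma exp_aux2 : (1 : ℝ≥0∞) / 1 = 1/((3:ℝ≥0∞)/2) + 1/3 := by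
  have h1 : (1:ℝ≥0∞)/((3:ℝ≥0∞)/2) = 2/3 := by
    rw [show (1:ℝ≥0∞)/((3:ℝ≥0∞)/2) = ((3:ℝ≥0∞)/2)⁻¹ from one_div _,
      ENNReal.inv_div (Or.inr (by norm_num)) (Or.inr (by norm_num))]
  rw [h1, ENNReal.div_add_div_same,
    show (2:ℝ≥0∞) + 1 = 3 from by norm_num]
  rw [ENNReal.div_self (a := 3) (by norm_num) (by norm_num)]
  simp

lemma mk_int3 {q : ℝ} (hq : 3 < q) {u v : Sp → ℝ}
    (hu : MemLp u (ENNReal.ofReal q) volume) (hv : MemLp v (ENNReal.ofReal q) volume)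
    (a b c R : ℝ) :
    IntegrableOn (fun x => (a + b * |u x| + c * |v x|) ^ 3) (Metric.closedBall 0 R) volume := by
  set μB := (volume : Measure Sp).restrict (Metric.closedBall 0 R) with hμB
  haveI : IsFiniteMeasure μB := ⟨by
    rw [hμB, Measure.restrict_apply_univ]
    exact measure_closedBall_lt_top⟩
  set w : Sp → ℝ := fun x => a + b * |u x| + c * |v x| with hw
  have hwq : MemLp w (ENNReal.ofReal q) μB := by
    have h1 : MemLp (fun x => b * |u x|) (ENNReal.ofReal q) μB :=
      ((hu.restrict _).norm).const_mul b
    have h2 : MemLp (fun x => c * |v x|) (ENNReal.ofReal q) μB :=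
      ((hv.restrict _).norm).const_mul c
    have h3 := (memLp_const (μ := μB) (p := ENNReal.ofReal q) a).add h1
    have h4 := h3.add h2
    exact h4
  have h3q : (3:ℝ≥0∞) ≤ ENNReal.ofReal q := by
    rw [show (3:ℝ≥0∞) = ENNReal.ofReal 3 by norm_num]
    exact ENNReal.ofReal_le_ofReal hq.le
  have hw3 : MemLp w 3 μB := hwq.mono_exponent h3q
  have hww : MemLp (fun x => w x * w x) ((3:ℝ≥0∞)/2) μB := by
    have := MemLp.smul (φ := w) (f := w) (hpqr := ⟨by simpa only [one_div] using exp_aux1.symm⟩) hw3 hw3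
    exact this
  have hwww : MemLp (fun x => (w x * w x) * w x) 1 μB := by
    have := MemLp.smul (φ := fun x => w x * w x) (f := w) (hpqr := ⟨by simpa only [one_div] using exp_aux2.symm⟩) hw3 hww
    exact this
  have hint : Integrable (fun x => (w x * w x) * w x) μB := memLp_one_iff_integrable.1 hwww
  refine hint.congr (ae_of_all _ fun x => ?_)
  ring

lemma cocompact_bound {u : Sp → ℝ} (h : Tendsto u (cocompact Sp) (𝓝 0)) {ε : ℝ} (hε : 0 < ε) :
    ∃ R : ℝ, 0 < R ∧ ∀ x : Sp, R ≤ ‖x‖ → |u x| ≤ ε := by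
  have hev : ∀ᶠ x in cocompact Sp, |u x| ≤ ε := by
    filter_upwards [h (Metric.closedBall_mem_nhds (0:ℝ) hε)] with x hx
    simpa [Real.dist_eq] using hx
  obtain ⟨K, hK, hKsub⟩ := hasBasis_cocompact.eventually_iff.1 hev
  obtain ⟨r, hr⟩ := hK.isBounded.subset_closedBall 0
  refine ⟨max r 0 + 1, by positivity, fun x hx => ?_⟩
  refine hKsub ?_
  intro hxK
  have h1 := hr hxK
  rw [Metric.mem_closedBall, dist_zero_right] at h1
  have h2 : r ≤ max r 0 := le_max_left _ _
  linarith

lemma phi_le {φ : Sp → ℝ} (hnp : ∀ x, φ x ≤ 0) (x : Sp) :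
    φ x ≤ -(mPhi φ / (1 + ‖x‖)) := by
  have h1 : mPhi φ ≤ (1 + ‖x‖) * |φ x| := by
    refine ciInf_le ⟨0, ?_⟩ x
    rintro y ⟨z, rfl⟩
    positivity
  have hr : (0:ℝ) < 1 + ‖x‖ := by positivity
  rw [abs_of_nonpos (hnp x)] at h1
  have h2 : mPhi φ / (1 + ‖x‖) ≤ -φ x := by
    rw [div_le_iff₀ hr]
    nlinarith
  linarith

end Stmt7Aux


/-- differentiability of λ ↦ a_{φ+λh}^{-1}(s) and formula for the derivative. -/
theorem stmt7 (q : ℝ) (hq : 3 < q) (φ φt : Sp → ℝ) (hφ : IsPhiq q φ) (hφt : IsPhiq q φt)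
    (s : ℝ) (hs : 0 < s) :
    ContDiffOn ℝ 1 (fun l : ℝ => aJacInv (fun x => φ x + l * (φt x - φ x)) s)
      (Icc (0 : ℝ) 1) ∧
    ∀ l ∈ Icc (0 : ℝ) 1,
      HasDerivWithinAt (fun l' : ℝ => aJacInv (fun x => φ x + l' * (φt x - φ x)) s)
        ((∫ x : Sp,
            Kfun (aJacInv (fun y => φ y + l * (φt y - φ y)) s - φ x - l * (φt x - φ x))
              * (φt x - φ x)) /
          (∫ x : Sp,
            Kfun (aJacInv (fun y => φ y + l * (φt y - φ y)) s - φ x - l * (φt x - φ x))))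
        (Icc (0 : ℝ) 1) l := by
  classical
  have hφas : AEStronglyMeasurable φ (volume : Measure Sp) := hφ.lq.aestronglyMeasurable
  have hφtas : AEStronglyMeasurable φt (volume : Measure Sp) := hφt.lq.aestronglyMeasurable
  set φ₀ : Sp → ℝ := hφas.mk φ with hφ₀def
  set φt₀ : Sp → ℝ := hφtas.mk φt with hφt₀def
  have hφ₀meas : Measurable φ₀ := hφas.stronglyMeasurable_mk.measurable
  have hφt₀meas : Measurable φt₀ := hφtas.stronglyMeasurable_mk.measurable
  have hφae : φ =ᵐ[(volume : Measure Sp)] φ₀ := hφas.ae_eq_mk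
  have hφtae : φt =ᵐ[(volume : Measure Sp)] φt₀ := hφtas.ae_eq_mk
  set h₀ : Sp → ℝ := fun x => φt₀ x - φ₀ x with hh₀def
  have hh₀meas : Measurable h₀ := hφt₀meas.sub hφ₀meas
  have hφ₀lq : MemLp φ₀ (ENNReal.ofReal q) volume := hφ.lq.ae_eq hφae
  have hφt₀lq : MemLp φt₀ (ENNReal.ofReal q) volume := hφt.lq.ae_eq hφtae
  have hh₀lq : MemLp h₀ (ENNReal.ofReal q) volume := by
    have := hφt₀lq.sub hφ₀lq
    exact this
  have c : Stmt7Aux.Ctx φ₀ h₀ := by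
    refine ⟨hφ₀meas, hh₀meas, ?_, ?_⟩
    · intro a b c' R _ _ _
      exact Stmt7Aux.mk_int3 hq hφ₀lq hh₀lq a b c' R
    · intro ε hε
      obtain ⟨R1, hR1, hb1⟩ := Stmt7Aux.cocompact_bound hφ.zeroAtInfty
        (show (0:ℝ) < ε/4 by linarith)
      obtain ⟨R2, hR2, hb2⟩ := Stmt7Aux.cocompact_bound hφt.zeroAtInfty
        (show (0:ℝ) < ε/4 by linarith)
      refine ⟨max R1 R2, lt_of_lt_of_le hR1 (le_max_left _ _), ?_⟩
      filter_upwards [hφae, hφtae] with x h1 h2 hx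
      have hx1 : R1 ≤ ‖x‖ := le_trans (le_max_left _ _) hx
      have hx2 : R2 ≤ ‖x‖ := le_trans (le_max_right _ _) hx
      have e1 := hb1 x hx1
      have e2 := hb2 x hx2
      show |φ₀ x| + |φt₀ x - φ₀ x| ≤ ε
      rw [← h1, ← h2]
      have e3 : |φt x - φ x| ≤ |φt x| + |φ x| := abs_sub _ _
      linarith
  set m : ℝ := min (mPhi φ) (mPhi φt) with hmdef
  have hm : 0 < m := lt_min hφ.m_pos hφt.m_pos
  have hlow : ∀ᵐ x ∂(volume : Measure Sp), ∀ l : ℝ, 0 ≤ l → l ≤ 1 →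
      Stmt7Aux.psi φ₀ h₀ l x ≤ -(m / (1 + ‖x‖)) := by
    filter_upwards [hφae, hφtae] with x h1 h2 l hl0 hl1
    have hA := Stmt7Aux.phi_le hφ.nonpos x
    have hB := Stmt7Aux.phi_le hφt.nonpos x
    have hr : (0:ℝ) < 1 + ‖x‖ := by positivity
    have hpsi : Stmt7Aux.psi φ₀ h₀ l x = (1 - l) * φ x + l * φt x := by
      show φ₀ x + l * (φt₀ x - φ₀ x) = (1 - l) * φ x + l * φt x
      rw [← h1, ← h2]; ring
    rw [hpsi]
    have hmA : m ≤ mPhi φ := min_le_left _ _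
    have hmB : m ≤ mPhi φt := min_le_right _ _
    have k1 : (1-l) * φ x ≤ (1-l) * (-(mPhi φ / (1+‖x‖))) :=
      mul_le_mul_of_nonneg_left hA (by linarith)
    have k2 : l * φt x ≤ l * (-(mPhi φt / (1+‖x‖))) :=
      mul_le_mul_of_nonneg_left hB hl0
    have e1 : m / (1+‖x‖) ≤ mPhi φ / (1+‖x‖) := by gcongr
    have e2 : m / (1+‖x‖) ≤ mPhi φt / (1+‖x‖) := by gcongr
    nlinarith [mul_le_mul_of_nonneg_left e1 (by linarith : (0:ℝ) ≤ 1 - l),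
      mul_le_mul_of_nonneg_left e2 hl0]
  have hmdl : ∀ l ∈ Icc (0:ℝ) 1,
      ((l, Stmt7Aux.Efun φ₀ h₀ s l) ∈ Stmt7Aux.Dom) ∧
      0 < Stmt7Aux.IK φ₀ h₀ (l, Stmt7Aux.Efun φ₀ h₀ s l) ∧
      HasDerivWithinAt (Stmt7Aux.Efun φ₀ h₀ s)
        (Stmt7Aux.IKh φ₀ h₀ (l, Stmt7Aux.Efun φ₀ h₀ s l) /
          Stmt7Aux.IK φ₀ h₀ (l, Stmt7Aux.Efun φ₀ h₀ s l)) (Icc (0:ℝ) 1) l :=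
    fun l hl => Stmt7Aux.main_deriv c hm hlow hs hl
  have hpsiae : ∀ l : ℝ, (fun x => φ x + l * (φt x - φ x))
      =ᵐ[(volume : Measure Sp)] Stmt7Aux.psi φ₀ h₀ l := by
    intro l
    filter_upwards [hφae, hφtae] with x h1 h2
    show φ x + l * (φt x - φ x) = φ₀ x + l * (φt₀ x - φ₀ x)
    rw [h1, h2]
  have hfun_eq : (fun l : ℝ => aJacInv (fun x => φ x + l * (φt x - φ x)) s)
      = Stmt7Aux.Efun φ₀ h₀ s := by
    funext l
    exact Stmt7Aux.aJacInv_congr (hpsiae l) s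
  have hnum : ∀ l : ℝ,
      (∫ x : Sp, Kfun (aJacInv (fun y => φ y + l * (φt y - φ y)) s - φ x - l * (φt x - φ x))
          * (φt x - φ x))
        = Stmt7Aux.IKh φ₀ h₀ (l, Stmt7Aux.Efun φ₀ h₀ s l) := by
    intro l
    have hE : aJacInv (fun y => φ y + l * (φt y - φ y)) s = Stmt7Aux.Efun φ₀ h₀ s l :=
      Stmt7Aux.aJacInv_congr (hpsiae l) s
    rw [hE]
    refine integral_congr_ae ?_
    filter_upwards [hφae, hφtae] with x h1 h2
    show Kfun (Stmt7Aux.Efun φ₀ h₀ s l - φ x - l * (φt x - φ x)) * (φt x - φ x)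
        = Kfun (Stmt7Aux.argf φ₀ h₀ (l, Stmt7Aux.Efun φ₀ h₀ s l) x) * h₀ x
    rw [h1, h2]
    rfl
  have hden : ∀ l : ℝ,
      (∫ x : Sp, Kfun (aJacInv (fun y => φ y + l * (φt y - φ y)) s - φ x - l * (φt x - φ x)))
        = Stmt7Aux.IK φ₀ h₀ (l, Stmt7Aux.Efun φ₀ h₀ s l) := by
    intro l
    have hE : aJacInv (fun y => φ y + l * (φt y - φ y)) s = Stmt7Aux.Efun φ₀ h₀ s l :=
      Stmt7Aux.aJacInv_congr (hpsiae l) s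
    rw [hE]
    refine integral_congr_ae ?_
    filter_upwards [hφae, hφtae] with x h1 h2
    show Kfun (Stmt7Aux.Efun φ₀ h₀ s l - φ x - l * (φt x - φ x))
        = Kfun (Stmt7Aux.argf φ₀ h₀ (l, Stmt7Aux.Efun φ₀ h₀ s l) x)
    rw [h1, h2]
    rfl
  have hDl : ∀ l ∈ Icc (0:ℝ) 1, HasDerivWithinAt (Stmt7Aux.Efun φ₀ h₀ s)
      (Stmt7Aux.IKh φ₀ h₀ (l, Stmt7Aux.Efun φ₀ h₀ s l) /
        Stmt7Aux.IK φ₀ h₀ (l, Stmt7Aux.Efun φ₀ h₀ s l)) (Icc (0:ℝ) 1) l :=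
    fun l hl => (hmdl l hl).2.2
  constructor
  · rw [hfun_eq]
    have hdiffOn : DifferentiableOn ℝ (Stmt7Aux.Efun φ₀ h₀ s) (Icc 0 1) :=
      fun l hl => (hDl l hl).differentiableWithinAt
    have hcontE : ContinuousOn (Stmt7Aux.Efun φ₀ h₀ s) (Icc 0 1) :=
      fun l hl => (hDl l hl).continuousWithinAt
    have hDcont : ContinuousOn (fun l => Stmt7Aux.IKh φ₀ h₀ (l, Stmt7Aux.Efun φ₀ h₀ s l) /
        Stmt7Aux.IK φ₀ h₀ (l, Stmt7Aux.Efun φ₀ h₀ s l)) (Icc 0 1) := by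
      intro l hl
      have hkey := Stmt7Aux.key c (hmdl l hl).1
      have hpair : ContinuousWithinAt
          (fun l' => ((l', Stmt7Aux.Efun φ₀ h₀ s l') : ℝ × ℝ)) (Icc 0 1) l :=
        (continuousWithinAt_id).prodMk (hcontE l hl)
      have h1 := ContinuousAt.comp_continuousWithinAt
        (f := fun l' => ((l', Stmt7Aux.Efun φ₀ h₀ s l') : ℝ × ℝ))
        (g := Stmt7Aux.IKh φ₀ h₀) hkey.2.2.2.2.2 hpair
      have h2 := ContinuousAt.comp_continuousWithinAt
        (f := fun l' => ((l', Stmt7Aux.Efun φ₀ h₀ s l') : ℝ × ℝ))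
        (g := Stmt7Aux.IK φ₀ h₀) hkey.2.2.2.2.1 hpair
      exact ContinuousWithinAt.div h1 h2 (hmdl l hl).2.1.ne'
    have hfinal := (contDiffOn_succ_iff_derivWithin (n := 0)
      (uniqueDiffOn_Icc zero_lt_one)).2 ⟨hdiffOn, by simp, ?_⟩
    · simpa using hfinal
    · rw [contDiffOn_zero]
      refine hDcont.congr ?_
      intro l hl
      exact (hDl l hl).derivWithin ((uniqueDiffOn_Icc zero_lt_one) l hl)
  · intro l hl
    rw [hfun_eq, hnum l, hden l]
    exact (hmdl l hl).2.2
end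
end

section
/- Let p > 3/2, let f ∈ E_p be nonzero, let q > 3 and φ ∈ Φ_q. Then the rearrangement f^{*φ} of f with respect to the microscopic energy is equimeasurable with f: for all s ≥ 0, μ_{f^{*φ}}(s) = μ_f(s). In particular ∫_{ℝ⁶} β(f^{*φ}) dx dv = ∫_{ℝ⁶} β(f) dx dv for every C¹ function β : [0,∞) → [0,∞) with β(0) = 0. -/
noncomputable section

open MeasureTheory Real Set Filter Topology
open scoped ENNReal NNReal

section AuxStmt9

open ENNReal

lemma vW_one_le (v : Sp) : 1 ≤ vW v := by
  rw [vW, show (1:ℝ) = Real.sqrt 1 from Real.sqrt_one.symm]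
  exact Real.sqrt_le_sqrt (by nlinarith [sq_nonneg ‖v‖, Real.sqrt_one])

lemma continuous_vW : Continuous vW :=
  Real.continuous_sqrt.comp (continuous_const.add ((continuous_norm).pow 2))

lemma measurable_microE {φ : Sp → ℝ} (hm : Measurable φ) : Measurable (microE φ) := by
  have h1 : Measurable fun z : Ph => vW z.2 := (continuous_vW.comp continuous_snd).measurable
  exact (h1.sub measurable_const).add (hm.comp measurable_fst)

lemma vW_level_null (c : ℝ) : volume {v : Sp | vW v = c} = 0 := by
  have hsub : {v : Sp | vW v = c} ⊆ Metric.sphere (0:Sp) (Real.sqrt (c^2 - 1)) := by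
    intro v hv
    simp only [Set.mem_setOf_eq] at hv
    have hnn : (0:ℝ) ≤ 1 + ‖v‖^2 := by positivity
    have hc2 : c^2 = 1 + ‖v‖^2 := by
      rw [← hv, vW, Real.sq_sqrt hnn]
    have : Real.sqrt (c^2 - 1) = ‖v‖ := by
      rw [show c^2 - 1 = ‖v‖^2 by linarith]
      exact Real.sqrt_sq (norm_nonneg v)
    rw [mem_sphere_zero_iff_norm, this]
  exact measure_mono_null hsub (Measure.addHaar_sphere volume _ _)

lemma microE_level_null {φ : Sp → ℝ} (hm : Measurable φ) (c : ℝ) :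
    volume {z : Ph | microE φ z = c} = 0 := by
  have hms : MeasurableSet {z : Ph | microE φ z = c} :=
    measurableSet_eq_fun (measurable_microE hm) measurable_const
  rw [MeasureTheory.Measure.volume_eq_prod, Measure.prod_apply hms]
  have : ∀ x : Sp, (volume : Measure Sp) (Prod.mk x ⁻¹' {z : Ph | microE φ z = c}) = 0 := by
    intro x
    have hsub : Prod.mk x ⁻¹' {z : Ph | microE φ z = c} ⊆ {v : Sp | vW v = c + 1 - φ x} := by
      intro v hv
      simp only [Set.mem_preimage, Set.mem_setOf_eq, microE] at hv ⊢
      linarith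
    exact measure_mono_null hsub (vW_level_null _)
  rw [MeasureTheory.lintegral_congr this, MeasureTheory.lintegral_zero]

lemma aJacE_mono (φ : Sp → ℝ) : Monotone (aJacE φ) :=
  fun a b hab => measure_mono (fun z hz => lt_of_lt_of_le hz hab)

lemma measurableSet_of_lowerSet {S : Set ℝ} (h : ∀ a b : ℝ, a ≤ b → b ∈ S → a ∈ S) :
    MeasurableSet S := by
  by_cases hne : S.Nonempty
  · by_cases hbd : BddAbove S
    · set c := sSup S with hc
      have h2 : S ⊆ Set.Iic c := fun x hx => le_csSup hbd hx
      by_cases hcS : c ∈ S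
      · have : S = Set.Iic c := by
          refine Set.Subset.antisymm h2 fun x hx => h x c hx hcS
        rw [this]; exact measurableSet_Iic
      · have : S = Set.Iio c := by
          refine Set.Subset.antisymm (fun x hx => ?_) (fun x hx => ?_)
          · exact Set.mem_Iio.2 (lt_of_le_of_ne (h2 hx) (fun hxc => hcS (hxc ▸ hx)))
          · obtain ⟨y, hy, hxy⟩ := exists_lt_of_lt_csSup hne hx
            exact h x y hxy.le hy
        rw [this]; exact measurableSet_Iio
    · have : S = Set.univ := by
        refine Set.eq_univ_of_forall fun x => ?_
        obtain ⟨y, hy, hxy⟩ := not_bddAbove_iff.1 hbd x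
        exact h x y hxy.le hy
      rw [this]; exact MeasurableSet.univ
  · rw [Set.not_nonempty_iff_eq_empty.1 hne]; exact MeasurableSet.empty

lemma lintegral_abs_rpow_lt_top {q : ℝ} (hq : 0 < q) {φ : Sp → ℝ}
    (hφ : MeasureTheory.MemLp φ (ENNReal.ofReal q) volume) :
    ∫⁻ x, ENNReal.ofReal (|φ x| ^ q) ∂(volume : Measure Sp) < ∞ := by
  have h0 : ENNReal.ofReal q ≠ 0 := by
    simp [ENNReal.ofReal_eq_zero, not_le, hq]
  have htop : ENNReal.ofReal q ≠ ∞ := ENNReal.ofReal_ne_top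
  have hlt := hφ.eLpNorm_lt_top
  rw [MeasureTheory.eLpNorm_eq_lintegral_rpow_enorm_toReal h0 htop,
    ENNReal.toReal_ofReal hq.le] at hlt
  have hfin : ∫⁻ x, ‖φ x‖ₑ ^ q ∂volume < ∞ := by
    by_contra hcon
    rw [not_lt, top_le_iff] at hcon
    rw [hcon, ENNReal.top_rpow_of_pos (by positivity : (0:ℝ) < 1/q)] at hlt
    exact (lt_irrefl _ hlt).elim
  have heq : ∀ x : Sp, ENNReal.ofReal (|φ x| ^ q) = ‖φ x‖ₑ ^ q := by
    intro x
    rw [Real.enorm_eq_ofReal_abs, ENNReal.ofReal_rpow_of_nonneg (abs_nonneg _) hq.le]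
  rw [lintegral_congr heq]
  exact hfin

end AuxStmt9
lemma finrank_Sp : Module.finrank ℝ Sp = 3 := finrank_euclideanSpace_fin

lemma volume_ball_Sp {r : ℝ} (hr : 0 ≤ r) :
    (volume : Measure Sp) (Metric.ball 0 r)
      = ENNReal.ofReal (r ^ 3) * volume (Metric.ball (0:Sp) 1) := by
  rw [Measure.addHaar_ball volume 0 hr, finrank_Sp]

lemma aJacE_lt_top {q : ℝ} (hq3 : 3 ≤ q) {φ : Sp → ℝ} (hm : Measurable φ)
    (hLq : ∫⁻ x, ENNReal.ofReal (|φ x| ^ q) ∂(volume : Measure Sp) < ∞)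
    {e : ℝ} (he : e < 0) : aJacE φ e < ∞ := by
  set ε : ℝ := -e with hεdef
  have hε : 0 < ε := by simp [hεdef]; linarith
  set C : ℝ := (1 + 2/ε) ^ ((3:ℝ)/2) * ε ^ (3 - q) with hCdef
  have hC : 0 ≤ C := by positivity
  set B : ℝ≥0∞ := volume (Metric.ball (0:Sp) 1) with hBdef
  have hBlt : B < ∞ := measure_ball_lt_top
  have hms : MeasurableSet {z : Ph | microE φ z < e} :=
    measurableSet_lt (measurable_microE hm) measurable_const
  rw [aJacE, MeasureTheory.Measure.volume_eq_prod, Measure.prod_apply hms]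
  have hpt : ∀ x : Sp, (volume : Measure Sp) (Prod.mk x ⁻¹' {z : Ph | microE φ z < e})
      ≤ ENNReal.ofReal C * B * ENNReal.ofReal (|φ x| ^ q) := by
    intro x
    by_cases hx : e ≤ φ x
    · have : Prod.mk x ⁻¹' {z : Ph | microE φ z < e} = ∅ := by
        ext v
        simp only [Set.mem_preimage, Set.mem_setOf_eq, Set.mem_empty_iff_false, iff_false,
          not_lt, microE]
        have := vW_one_le v
        linarith
      rw [this]; simp
    · push_neg at hx
      set u : ℝ := e - φ x with hudef
      have hu : 0 < u := by simp [hudef]; linarith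
      set w : ℝ := |φ x| with hwdef
      have hwφ : w = -φ x := abs_of_neg (by linarith)
      have hεw : ε ≤ w := by rw [hwφ]; simp [hεdef]; linarith
      have hw : 0 < w := lt_of_lt_of_le hε hεw
      have huw : u ≤ w := by rw [hwφ]; simp [hudef]; linarith
      -- slice inside a ball
      have hsub : Prod.mk x ⁻¹' {z : Ph | microE φ z < e}
          ⊆ Metric.ball (0:Sp) (Real.sqrt (u^2 + 2*u)) := by
        intro v hv
        simp only [Set.mem_preimage, Set.mem_setOf_eq, microE] at hv
        have hvW : vW v < 1 + u := by simp [hudef]; linarith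
        have hnn : (0:ℝ) ≤ 1 + ‖v‖^2 := by positivity
        have hsq : ‖v‖^2 < u^2 + 2*u := by
          have h1 : 1 + ‖v‖^2 < (1+u)^2 := by
            have := Real.sq_sqrt hnn
            nlinarith [Real.sqrt_nonneg (1 + ‖v‖^2), vW_one_le v,
              (show vW v ^ 2 = 1 + ‖v‖^2 by rw [vW, Real.sq_sqrt hnn])]
          nlinarith
        rw [mem_ball_zero_iff]
        calc ‖v‖ = Real.sqrt (‖v‖^2) := (Real.sqrt_sq (norm_nonneg v)).symm
          _ < Real.sqrt (u^2 + 2*u) := Real.sqrt_lt_sqrt (sq_nonneg _) hsq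
      have hball := volume_ball_Sp (Real.sqrt_nonneg (u^2 + 2*u))
      -- real estimate
      have hreal : Real.sqrt (u^2 + 2*u) ^ 3 ≤ C * w ^ q := by
        have ha : (0:ℝ) ≤ u^2 + 2*u := by positivity
        have h1 : Real.sqrt (u^2 + 2*u) ^ 3 = (u^2 + 2*u) ^ ((3:ℝ)/2) := by
          rw [show Real.sqrt (u^2+2*u) ^ 3 = Real.sqrt (u^2+2*u) ^ ((3:ℕ):ℝ) from
            (Real.rpow_natCast _ 3).symm, Real.sqrt_eq_rpow, ← Real.rpow_mul ha]
          norm_num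
        have h2 : u^2 + 2*u ≤ w^2 * (1 + 2/ε) := by
          have : 2*w ≤ 2*w^2/ε := by
            rw [le_div_iff₀ hε]; nlinarith
          have h2w : 2*u ≤ 2*w := by linarith
          have hw2 : w^2 * (1 + 2/ε) = w^2 + 2*w^2/ε := by ring
          nlinarith
        have h3 : (u^2 + 2*u) ^ ((3:ℝ)/2) ≤ (w^2 * (1 + 2/ε)) ^ ((3:ℝ)/2) :=
          Real.rpow_le_rpow ha h2 (by norm_num)
        have h4 : (w^2 * (1 + 2/ε)) ^ ((3:ℝ)/2)
            = w ^ (3:ℝ) * (1 + 2/ε) ^ ((3:ℝ)/2) := by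
          rw [Real.mul_rpow (by positivity) (by positivity)]
          congr 1
          rw [show w^2 = w ^ ((2:ℕ):ℝ) from (Real.rpow_natCast _ 2).symm,
            ← Real.rpow_mul hw.le]
          norm_num
        have h5 : w ^ (3:ℝ) ≤ w ^ q * ε ^ (3 - q) := by
          have : w ^ (3:ℝ) = w ^ q * w ^ (3 - q) := by
            rw [← Real.rpow_add hw]; ring_nf
          rw [this]
          have : w ^ (3 - q) ≤ ε ^ (3 - q) :=
            Real.rpow_le_rpow_of_nonpos hε hεw (by linarith)
          exact mul_le_mul_of_nonneg_left this (Real.rpow_nonneg hw.le _)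
        calc Real.sqrt (u^2 + 2*u) ^ 3 = (u^2 + 2*u) ^ ((3:ℝ)/2) := h1
          _ ≤ w ^ (3:ℝ) * (1 + 2/ε) ^ ((3:ℝ)/2) := h3.trans_eq h4
          _ ≤ (w ^ q * ε ^ (3 - q)) * (1 + 2/ε) ^ ((3:ℝ)/2) := by
              apply mul_le_mul_of_nonneg_right h5 (by positivity)
          _ = C * w ^ q := by rw [hCdef]; ring
      have hwq : ENNReal.ofReal (C * w ^ q) = ENNReal.ofReal C * ENNReal.ofReal (w ^ q) :=
        ENNReal.ofReal_mul hC
      calc (volume : Measure Sp) (Prod.mk x ⁻¹' {z : Ph | microE φ z < e})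
          ≤ ENNReal.ofReal (Real.sqrt (u^2 + 2*u) ^ 3) * B :=
            le_trans (measure_mono hsub) (le_of_eq hball)
        _ ≤ ENNReal.ofReal (C * w ^ q) * B := by
            exact mul_le_mul_left (ENNReal.ofReal_le_ofReal hreal) B
        _ = ENNReal.ofReal C * B * ENNReal.ofReal (w ^ q) := by
            rw [hwq]; ring
  calc ∫⁻ x, (volume : Measure Sp) (Prod.mk x ⁻¹' {z : Ph | microE φ z < e}) ∂volume
      ≤ ∫⁻ x, ENNReal.ofReal C * B * ENNReal.ofReal (|φ x| ^ q) ∂volume :=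
        MeasureTheory.lintegral_mono hpt
    _ = ENNReal.ofReal C * B * ∫⁻ x, ENNReal.ofReal (|φ x| ^ q) ∂volume := by
        exact MeasureTheory.lintegral_const_mul' _ _
          (ENNReal.mul_ne_top ENNReal.ofReal_ne_top hBlt.ne)
    _ < ∞ := ENNReal.mul_lt_top
        (ENNReal.mul_lt_top ENNReal.ofReal_lt_top hBlt) hLq
lemma aJacE_small {φ : Sp → ℝ} (hm : Measurable φ)
    (hfin : ∀ e < (0:ℝ), aJacE φ e < ∞) {M : ℝ≥0∞} (hM : 0 < M) :
    ∃ e < (0:ℝ), aJacE φ e < M := by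
  have hmeas : ∀ n : ℕ, NullMeasurableSet {z : Ph | microE φ z < -1 - n} volume :=
    fun n => (measurableSet_lt (measurable_microE hm) measurable_const).nullMeasurableSet
  have hanti : Antitone fun n : ℕ => {z : Ph | microE φ z < -1 - n} := by
    intro n m hnm z hz
    simp only [Set.mem_setOf_eq] at hz ⊢
    have : (-1:ℝ) - m ≤ -1 - n := by
      have : (n:ℝ) ≤ m := Nat.cast_le.2 hnm
      linarith
    linarith
  have hone : volume {z : Ph | microE φ z < -1 - (0:ℕ)} ≠ ∞ := by
    have := hfin (-1 - (0:ℕ)) (by norm_num)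
    exact this.ne
  have hint : ⋂ n : ℕ, {z : Ph | microE φ z < -1 - n} = ∅ := by
    ext z
    simp only [Set.mem_iInter, Set.mem_setOf_eq, Set.mem_empty_iff_false, iff_false, not_forall,
      not_lt]
    obtain ⟨n, hn⟩ := exists_nat_gt (-1 - microE φ z)
    exact ⟨n, by linarith⟩
  have htend := tendsto_measure_iInter_atTop (μ := volume) hmeas hanti ⟨0, hone⟩
  rw [hint] at htend
  simp only [measure_empty] at htend
  have := htend.eventually_lt_const hM
  obtain ⟨n, hn⟩ := this.exists
  refine ⟨-1 - n, ?_, hn⟩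
  have : (0:ℝ) ≤ n := Nat.cast_nonneg n
  linarith

lemma microE_neg_top {φ : Sp → ℝ} {m : ℝ} (hm0 : 0 < m)
    (hlow : ∀ x : Sp, m ≤ (1 + ‖x‖) * |φ x|) (hnp : ∀ x, φ x ≤ 0) :
    volume {z : Ph | microE φ z < 0} = ∞ := by
  set B : ℝ≥0∞ := volume (Metric.ball (0:Sp) 1) with hBdef
  have hB0 : B ≠ 0 := (Metric.measure_ball_pos volume 0 one_pos).ne'
  have hBlt : B ≠ ∞ := measure_ball_lt_top.ne
  set r : ℕ → ℝ := fun n => Real.sqrt (2*m/(n+2)) with hrdef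
  set E : ℕ → Set Ph := fun n =>
    (Metric.ball (0:Sp) (n+1) \ Metric.ball 0 n) ×ˢ Metric.ball (0:Sp) (r n) with hEdef
  have hEm : ∀ n, MeasurableSet (E n) :=
    fun n => (measurableSet_ball.diff measurableSet_ball).prod measurableSet_ball
  have hEsub : ∀ n, E n ⊆ {z : Ph | microE φ z < 0} := by
    intro n z hz
    obtain ⟨⟨hx1, hx2⟩, hv⟩ := hz
    rw [mem_ball_zero_iff] at hx1 hv
    rw [Metric.mem_ball, not_lt, dist_zero_right] at hx2
    set x := z.1; set v := z.2
    have hφx : m / (1 + ‖x‖) ≤ -φ x := by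
      have h1 : |φ x| = -φ x := abs_of_nonpos (hnp x)
      have h2 := hlow x
      rw [h1] at h2
      rw [div_le_iff₀ (by positivity)]
      linarith [h2]
    set c : ℝ := m / ((n:ℝ)+2) with hcdef
    have hc0 : 0 < c := by positivity
    have hcφ : c < -φ x := by
      have : c < m / (1 + ‖x‖) := by
        rw [hcdef, div_lt_div_iff₀ (by positivity) (by positivity)]
        nlinarith
      linarith
    have hv2 : ‖v‖^2 < 2*m/(n+2) := by
      have := (Real.lt_sqrt (norm_nonneg v)).1 hv
      linarith
    have hvW : vW v < 1 + c := by
      rw [vW]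
      have h1 : 1 + ‖v‖^2 < (1+c)^2 := by
        have : 2*m/((n:ℝ)+2) = 2*c := by rw [hcdef]; ring
        nlinarith
      calc Real.sqrt (1 + ‖v‖^2) < Real.sqrt ((1+c)^2) :=
            Real.sqrt_lt_sqrt (by positivity) h1
        _ = 1 + c := Real.sqrt_sq (by positivity)
    show microE φ z < 0
    rw [microE]
    have : vW v - 1 < c := by linarith
    linarith
  have hdisj : Pairwise (Function.onFun Disjoint E) := by
    intro i j hij
    rw [Function.onFun]
    rw [Set.disjoint_left]
    rintro z ⟨⟨hi1, hi2⟩, -⟩ ⟨⟨hj1, hj2⟩, -⟩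
    rw [mem_ball_zero_iff] at hi1 hj1
    rw [Metric.mem_ball, not_lt, dist_zero_right] at hi2 hj2
    apply hij
    have h1 : i < j + 1 := by exact_mod_cast lt_of_le_of_lt hi2 (lt_of_le_of_lt (le_refl _) (by push_cast; linarith : (‖z.1‖:ℝ) < (j:ℝ)+1))
    have h2 : j < i + 1 := by exact_mod_cast lt_of_le_of_lt hj2 (by push_cast; linarith : (‖z.1‖:ℝ) < (i:ℝ)+1)
    omega
  set δ : ℝ := m * Real.sqrt (2*m) / 2 with hδdef
  have hδ : 0 < δ := by
    have : 0 < Real.sqrt (2*m) := Real.sqrt_pos.2 (by linarith)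
    positivity
  have hlb : ∀ n : ℕ, ENNReal.ofReal δ * (B * B) ≤ volume (E n) := by
    intro n
    have hr0 : 0 ≤ r n := Real.sqrt_nonneg _
    have hn1 : (0:ℝ) ≤ (n:ℝ) + 1 := by positivity
    -- annulus lower bound
    have hannlb : ENNReal.ofReal (((n:ℝ)+1)^3 - (n:ℝ)^3) * B
        ≤ volume (Metric.ball (0:Sp) (n+1) \ Metric.ball 0 n) := by
      have h1 : volume (Metric.ball (0:Sp) ((n:ℝ)+1)) - volume (Metric.ball (0:Sp) (n:ℝ))
          ≤ volume (Metric.ball (0:Sp) (n+1) \ Metric.ball 0 n) := le_measure_diff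
      have h2 : volume (Metric.ball (0:Sp) ((n:ℝ)+1)) = ENNReal.ofReal (((n:ℝ)+1)^3) * B :=
        volume_ball_Sp hn1
      have h3 : volume (Metric.ball (0:Sp) ((n:ℝ))) = ENNReal.ofReal (((n:ℝ))^3) * B :=
        volume_ball_Sp (by positivity)
      have h4 : ENNReal.ofReal (((n:ℝ)+1)^3 - (n:ℝ)^3) * B
          = ENNReal.ofReal (((n:ℝ)+1)^3) * B - ENNReal.ofReal ((n:ℝ)^3) * B := by
        rw [ENNReal.ofReal_sub _ (by positivity), ENNReal.sub_mul (fun _ _ => hBlt)]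
      rw [h4]
      rw [h2, h3] at h1
      exact h1
    have hEn : volume (E n) = volume (Metric.ball (0:Sp) (n+1) \ Metric.ball 0 n)
        * (ENNReal.ofReal (r n ^ 3) * B) := by
      rw [hEdef]
      simp only []
      rw [MeasureTheory.Measure.volume_eq_prod, Measure.prod_prod, volume_ball_Sp hr0]
    rw [hEn]
    -- real inequality : δ ≤ ((n+1)^3 - n^3) * r n ^ 3
    have hreal : δ ≤ (((n:ℝ)+1)^3 - (n:ℝ)^3) * r n ^ 3 := by
      set s : ℝ := Real.sqrt ((n:ℝ)+2) with hsdef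
      have hs1 : 1 ≤ s := by
        rw [hsdef, show (1:ℝ) = Real.sqrt 1 from Real.sqrt_one.symm]
        exact Real.sqrt_le_sqrt (by push_cast; linarith)
      have hs2 : s^2 = (n:ℝ)+2 := Real.sq_sqrt (by positivity)
      have hr : r n = Real.sqrt (2*m) / s := by
        rw [hrdef, hsdef]
        exact Real.sqrt_div (by linarith) _
      have hsm : 0 ≤ Real.sqrt (2*m) := Real.sqrt_nonneg _
      have hsm2 : Real.sqrt (2*m) ^ 2 = 2*m := Real.sq_sqrt (by linarith)
      set t : ℝ := Real.sqrt (2*m) with htdef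
      have hs0 : (0:ℝ) < s := lt_of_lt_of_le one_pos hs1
      have hr3 : r n ^ 3 = (2*m) * t / s^3 := by
        rw [hr, div_pow, pow_succ, hsm2]
      have hcube : s^3 ≤ 4 * ((((n:ℝ)+1)^3 - (n:ℝ)^3)) := by
        have hs3 : s^3 ≤ s^4 := by nlinarith [mul_nonneg (pow_nonneg hs0.le 3) (sub_nonneg.2 hs1)]
        have hs4 : s^4 = ((n:ℝ)+2)^2 := by nlinarith
        nlinarith [Nat.cast_nonneg (α := ℝ) n]
      have h1 : (s^3/4) * ((2*m)*t/s^3) ≤ (((n:ℝ)+1)^3 - (n:ℝ)^3) * ((2*m)*t/s^3) := by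
        apply mul_le_mul_of_nonneg_right ?_ (by positivity)
        linarith
      have h2 : (s^3/4) * ((2*m)*t/s^3) = m * t/2 := by
        field_simp
        ring
      rw [hr3, hδdef]
      calc m * t / 2 = (s^3/4) * ((2*m)*t/s^3) := h2.symm
        _ ≤ (((n:ℝ)+1)^3 - (n:ℝ)^3) * ((2*m)*t/s^3) := h1
    calc ENNReal.ofReal δ * (B * B)
        ≤ ENNReal.ofReal ((((n:ℝ)+1)^3 - (n:ℝ)^3) * r n ^ 3) * (B * B) :=
          mul_le_mul_left (ENNReal.ofReal_le_ofReal hreal) _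
      _ = (ENNReal.ofReal (((n:ℝ)+1)^3 - (n:ℝ)^3) * B) * (ENNReal.ofReal (r n ^ 3) * B) := by
          rw [ENNReal.ofReal_mul (by nlinarith [Nat.cast_nonneg (α := ℝ) n] : (0:ℝ) ≤ ((n:ℝ)+1)^3 - (n:ℝ)^3)]
          ring
      _ ≤ volume (Metric.ball (0:Sp) (n+1) \ Metric.ball 0 n) * (ENNReal.ofReal (r n ^ 3) * B) :=
          mul_le_mul_left hannlb _
  have hsum : (⊤:ℝ≥0∞) ≤ volume {z : Ph | microE φ z < 0} := by
    calc (⊤:ℝ≥0∞) = ∑' _ : ℕ, ENNReal.ofReal δ * (B * B) := by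
          rw [ENNReal.tsum_const_eq_top_of_ne_zero]
          exact mul_ne_zero (ENNReal.ofReal_pos.2 hδ).ne' (mul_ne_zero hB0 hB0)
      _ ≤ ∑' n : ℕ, volume (E n) := ENNReal.tsum_le_tsum hlb
      _ = volume (⋃ n, E n) := (measure_iUnion hdisj hEm).symm
      _ ≤ volume {z : Ph | microE φ z < 0} :=
          measure_mono (Set.iUnion_subset hEsub)
  exact top_le_iff.1 hsum
lemma key_measure {φ : Sp → ℝ} (hm : Measurable φ)
    (hfin : ∀ e < (0:ℝ), aJacE φ e < ∞)
    (hinf : volume {z : Ph | microE φ z < 0} = ∞) (M : ℝ≥0∞) :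
    volume {z : Ph | microE φ z < 0 ∧ aJacE φ (microE φ z) < M} = M := by
  rcases eq_or_ne M 0 with rfl | hM0
  · convert measure_empty (μ := (volume : Measure Ph))
    ext z
    simp only [Set.mem_setOf_eq, Set.mem_empty_iff_false, iff_false, not_and, not_lt]
    exact fun _ => zero_le
  rcases eq_or_ne M ∞ with rfl | hMtop
  · have : {z : Ph | microE φ z < 0 ∧ aJacE φ (microE φ z) < ∞} = {z : Ph | microE φ z < 0} := by
      ext z
      simp only [Set.mem_setOf_eq, and_iff_left_iff_imp]
      exact fun hz => hfin _ hz
    rw [this, hinf]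
  -- 0 < M < ∞
  have hM : 0 < M := hM0.bot_lt
  set S : Set ℝ := {e | e < 0 ∧ aJacE φ e < M} with hSdef
  obtain ⟨e₀, he₀, he₀M⟩ := aJacE_small hm hfin hM
  have hSne : S.Nonempty := ⟨e₀, he₀, he₀M⟩
  have hSbdd : BddAbove S := ⟨0, fun e he => he.1.le⟩
  set eM : ℝ := sSup S with heMdef
  have heM0 : eM ≤ 0 := csSup_le hSne fun e he => he.1.le
  have hSle : ∀ e ∈ S, e ≤ eM := fun e he => le_csSup hSbdd he
  have heMlt : eM < 0 := by
    rcases lt_or_eq_of_le heM0 with h | h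
    · exact h
    · exfalso
      have hall : ∀ e < (0:ℝ), aJacE φ e ≤ M := by
        intro e he
        have : e < eM := by rw [h]; exact he
        obtain ⟨e', he'S, hee'⟩ := exists_lt_of_lt_csSup hSne this
        exact (aJacE_mono φ hee'.le).trans he'S.2.le
      have hU : {z : Ph | microE φ z < 0} = ⋃ n : ℕ, {z : Ph | microE φ z < -(1/(n+1))} := by
        ext z
        simp only [Set.mem_setOf_eq, Set.mem_iUnion]
        constructor
        · intro hz
          obtain ⟨n, hn⟩ := exists_nat_one_div_lt (show (0:ℝ) < -microE φ z by linarith)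
          exact ⟨n, by push_cast at hn ⊢; linarith⟩
        · rintro ⟨n, hn⟩
          have : (0:ℝ) < 1/((n:ℝ)+1) := by positivity
          linarith
      have hMono : Monotone fun n : ℕ => {z : Ph | microE φ z < -(1/((n:ℝ)+1))} := by
        intro a b hab z hz
        simp only [Set.mem_setOf_eq] at hz ⊢
        have h1 : 1/((b:ℝ)+1) ≤ 1/((a:ℝ)+1) := by
          apply one_div_le_one_div_of_le (by positivity)
          have : (a:ℝ) ≤ b := Nat.cast_le.2 hab
          linarith
        linarith
      have := hMono.measure_iUnion (μ := volume)
      rw [← hU, hinf] at this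
      have hle : ∀ n : ℕ, volume {z : Ph | microE φ z < -(1/((n:ℝ)+1))} ≤ M :=
        fun n => hall _ (neg_lt_zero.2 (by positivity))
      have : (⊤:ℝ≥0∞) ≤ M := this.le.trans (iSup_le hle)
      exact hMtop (top_le_iff.1 this)
  -- volume of strict sublevel equals M
  have hlevel : volume {z : Ph | microE φ z = eM} = 0 := microE_level_null hm eM
  have hlt_le : volume {z : Ph | microE φ z < eM} ≤ M := by
    have hU : {z : Ph | microE φ z < eM} = ⋃ n : ℕ, {z : Ph | microE φ z < eM - 1/((n:ℝ)+1)} := by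
      ext z
      simp only [Set.mem_setOf_eq, Set.mem_iUnion]
      constructor
      · intro hz
        obtain ⟨n, hn⟩ := exists_nat_one_div_lt (show (0:ℝ) < eM - microE φ z by linarith)
        exact ⟨n, by linarith⟩
      · rintro ⟨n, hn⟩
        have : (0:ℝ) < 1/((n:ℝ)+1) := by positivity
        linarith
    have hMono : Monotone fun n : ℕ => {z : Ph | microE φ z < eM - 1/((n:ℝ)+1)} := by
      intro a b hab z hz
      simp only [Set.mem_setOf_eq] at hz ⊢
      have h1 : 1/((b:ℝ)+1) ≤ 1/((a:ℝ)+1) := by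
        apply one_div_le_one_div_of_le (by positivity)
        have : (a:ℝ) ≤ b := Nat.cast_le.2 hab
        linarith
      linarith
    rw [hU, hMono.measure_iUnion]
    refine iSup_le fun n => ?_
    have h1 : eM - 1/((n:ℝ)+1) < eM := by
      have : (0:ℝ) < 1/((n:ℝ)+1) := by positivity
      linarith
    obtain ⟨e', he'S, hee'⟩ := exists_lt_of_lt_csSup hSne h1
    exact ((aJacE_mono φ hee'.le).trans_lt he'S.2).le
  have hge : M ≤ volume {z : Ph | microE φ z ≤ eM} := by
    set d : ℕ → ℝ := fun n => (-eM/2) * (1/((n:ℝ)+1)) with hddef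
    have hd0 : ∀ n, 0 < d n := by
      intro n
      have : (0:ℝ) < -eM/2 := by linarith
      positivity
    have hdle : ∀ n, d n ≤ -eM/2 := by
      intro n
      rw [hddef]
      have h2 : 1/((n:ℝ)+1) ≤ 1 := by
        rw [div_le_one (by positivity)]
        have := Nat.cast_nonneg (α := ℝ) n
        linarith
      nlinarith [hd0 n]
    have hmeas : ∀ n : ℕ, NullMeasurableSet {z : Ph | microE φ z < eM + d n} volume :=
      fun n => (measurableSet_lt (measurable_microE hm) measurable_const).nullMeasurableSet
    have hanti : Antitone fun n : ℕ => {z : Ph | microE φ z < eM + d n} := by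
      intro a b hab z hz
      simp only [Set.mem_setOf_eq] at hz ⊢
      have h1 : d b ≤ d a := by
        rw [hddef]
        have h2 : 1/((b:ℝ)+1) ≤ 1/((a:ℝ)+1) := by
          apply one_div_le_one_div_of_le (by positivity)
          have : (a:ℝ) ≤ b := Nat.cast_le.2 hab
          linarith
        have : (0:ℝ) < -eM/2 := by linarith
        nlinarith
      linarith
    have hfin0 : volume {z : Ph | microE φ z < eM + d 0} ≠ ∞ :=
      (hfin _ (by linarith [hdle 0, hd0 0])).ne
    have hint : ⋂ n : ℕ, {z : Ph | microE φ z < eM + d n} = {z : Ph | microE φ z ≤ eM} := by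
      ext z
      simp only [Set.mem_iInter, Set.mem_setOf_eq]
      constructor
      · intro hz
        by_contra hc
        push_neg at hc
        obtain ⟨n, hn⟩ := exists_nat_one_div_lt
          (show (0:ℝ) < (microE φ z - eM) / (-eM/2) by
            apply div_pos (by linarith) (by linarith))
        have := hz n
        rw [hddef] at this
        simp only at this
        have h3 : (-eM/2) * (1/((n:ℝ)+1)) < (-eM/2) * ((microE φ z - eM) / (-eM/2)) := by
          apply mul_lt_mul_of_pos_left hn (by linarith)
        rw [mul_div_cancel₀ _ (by linarith : (-eM/2) ≠ 0)] at h3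
        linarith
      · intro hz n
        linarith [hd0 n]
    have htend := tendsto_measure_iInter_atTop (μ := volume) hmeas hanti ⟨0, hfin0⟩
    rw [hint] at htend
    refine ge_of_tendsto htend (Filter.Eventually.of_forall fun n => ?_)
    -- volume {microE < eM + d n} ≥ M
    have hnotS : eM + d n ∉ S := fun hmem => by
      have := hSle _ hmem
      linarith [hd0 n]
    have hlt0 : eM + d n < 0 := by linarith [hdle n]
    have : ¬ aJacE φ (eM + d n) < M := fun hc => hnotS ⟨hlt0, hc⟩
    exact not_lt.1 this
  have hge' : M ≤ volume {z : Ph | microE φ z < eM} := by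
    have hsub : {z : Ph | microE φ z ≤ eM}
        ⊆ {z : Ph | microE φ z < eM} ∪ {z : Ph | microE φ z = eM} := by
      intro z hz
      rcases lt_or_eq_of_le (Set.mem_setOf_eq ▸ hz) with h | h
      · exact Or.inl h
      · exact Or.inr h
    calc M ≤ volume {z : Ph | microE φ z ≤ eM} := hge
      _ ≤ volume ({z : Ph | microE φ z < eM} ∪ {z : Ph | microE φ z = eM}) := measure_mono hsub
      _ ≤ volume {z : Ph | microE φ z < eM} + volume {z : Ph | microE φ z = eM} :=
          measure_union_le _ _
      _ = volume {z : Ph | microE φ z < eM} := by rw [hlevel, add_zero]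
  have hslv : volume {z : Ph | microE φ z < eM} = M := le_antisymm hlt_le hge'
  -- sandwich the target set
  set A : Set Ph := {z : Ph | microE φ z < 0 ∧ aJacE φ (microE φ z) < M} with hAdef
  have hsub1 : {z : Ph | microE φ z < eM} ⊆ A := by
    intro z hz
    obtain ⟨e', he'S, hee'⟩ := exists_lt_of_lt_csSup hSne hz
    exact ⟨lt_trans hee' he'S.1, (aJacE_mono φ hee'.le).trans_lt he'S.2⟩
  have hsub2 : A ⊆ {z : Ph | microE φ z ≤ eM} :=
    fun z hz => hSle _ ⟨hz.1, hz.2⟩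
  refine le_antisymm ?_ ?_
  · calc volume A ≤ volume {z : Ph | microE φ z ≤ eM} := measure_mono hsub2
      _ ≤ volume {z : Ph | microE φ z < eM} + volume {z : Ph | microE φ z = eM} := by
          refine (measure_mono ?_).trans (measure_union_le _ _)
          intro z hz
          rcases lt_or_eq_of_le (Set.mem_setOf_eq ▸ hz) with h | h
          · exact Or.inl h
          · exact Or.inr h
      _ = M := by rw [hslv, hlevel, add_zero]
  · rw [← hslv]
    exact measure_mono hsub1
lemma distFun_antitone (f : Ph → ℝ) : Antitone (distFun f) :=
  fun a b hab => measure_mono fun z hz => lt_of_le_of_lt hab hz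

lemma schwarz_nonneg (f : Ph → ℝ) (t : ℝ) : 0 ≤ schwarz f t :=
  Real.sInf_nonneg fun _ hs => hs.1

lemma rearr_nonneg (f : Ph → ℝ) (φ : Sp → ℝ) (z : Ph) : 0 ≤ rearr f φ z := by
  rw [rearr]
  split
  · exact schwarz_nonneg f _
  · exact le_refl 0

lemma schwarz_gt_imp {f : Ph → ℝ} {s t : ℝ} (hs : 0 ≤ s) (h : s < schwarz f t) :
    ENNReal.ofReal t < distFun f s := by
  by_contra hc
  push_neg at hc
  have : schwarz f t ≤ s := csInf_le ⟨0, fun x hx => hx.1⟩ ⟨hs, hc⟩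
  linarith

lemma distFun_iUnion {f : Ph → ℝ} (s : ℝ) :
    distFun f s = ⨆ n : ℕ, distFun f (s + 1/((n:ℝ)+1)) := by
  have hMono : Monotone fun n : ℕ => {z : Ph | s + 1/((n:ℝ)+1) < f z} := by
    intro a b hab z hz
    simp only [Set.mem_setOf_eq] at hz ⊢
    have h1 : 1/((b:ℝ)+1) ≤ 1/((a:ℝ)+1) := by
      apply one_div_le_one_div_of_le (by positivity)
      have : (a:ℝ) ≤ b := Nat.cast_le.2 hab
      linarith
    linarith
  have hU : {z : Ph | s < f z} = ⋃ n : ℕ, {z : Ph | s + 1/((n:ℝ)+1) < f z} := by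
    ext z
    simp only [Set.mem_setOf_eq, Set.mem_iUnion]
    constructor
    · intro hz
      obtain ⟨n, hn⟩ := exists_nat_one_div_lt (show (0:ℝ) < f z - s by linarith)
      exact ⟨n, by linarith⟩
    · rintro ⟨n, hn⟩
      have : (0:ℝ) < 1/((n:ℝ)+1) := by positivity
      linarith
  rw [distFun, hU, hMono.measure_iUnion]
  rfl

lemma imp_schwarz_gt {f : Ph → ℝ} (hf0 : ∀ z, 0 ≤ f z) (hfm : Measurable f)
    (hIf : ∫⁻ z, ENNReal.ofReal (f z) ∂(volume : Measure Ph) ≠ ∞)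
    {s t : ℝ} (hs : 0 ≤ s) (ht : 0 < t) (h : ENNReal.ofReal t < distFun f s) :
    s < schwarz f t := by
  set I : ℝ≥0∞ := ∫⁻ z, ENNReal.ofReal (f z) ∂(volume : Measure Ph) with hIdef
  -- nonemptiness
  set s₀ : ℝ := (I.toReal + 1)/t with hs₀def
  have hs₀ : 0 < s₀ := by
    have := ENNReal.toReal_nonneg (a := I)
    positivity
  have hmarkov : ENNReal.ofReal s₀ * distFun f s₀ ≤ I := by
    have h1 : {z : Ph | s₀ < f z} ⊆ {z : Ph | ENNReal.ofReal s₀ ≤ ENNReal.ofReal (f z)} :=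
      fun z hz => ENNReal.ofReal_le_ofReal (le_of_lt hz)
    calc ENNReal.ofReal s₀ * distFun f s₀
        ≤ ENNReal.ofReal s₀ * volume {z : Ph | ENNReal.ofReal s₀ ≤ ENNReal.ofReal (f z)} :=
          mul_le_mul_right (measure_mono h1) _
      _ ≤ I := MeasureTheory.mul_meas_ge_le_lintegral₀
          ((ENNReal.measurable_ofReal.comp hfm).aemeasurable) _
  have hne : distFun f s₀ ≤ ENNReal.ofReal t := by
    by_contra hc
    push_neg at hc
    have h2 : ENNReal.ofReal s₀ * ENNReal.ofReal t ≤ ENNReal.ofReal s₀ * distFun f s₀ :=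
      mul_le_mul_right hc.le _
    have h3 : ENNReal.ofReal s₀ * ENNReal.ofReal t = ENNReal.ofReal (I.toReal + 1) := by
      rw [← ENNReal.ofReal_mul hs₀.le, hs₀def]
      congr 1
      field_simp
    have h4 : I < ENNReal.ofReal (I.toReal + 1) := by
      rw [ENNReal.ofReal_add ENNReal.toReal_nonneg zero_le_one,
        ENNReal.ofReal_toReal hIf]
      simpa using ENNReal.lt_add_right hIf (by norm_num)
    have := (h3 ▸ h2).trans hmarkov
    exact absurd (lt_of_lt_of_le h4 this) (lt_irrefl _)
  have hSne : {s' : ℝ | 0 ≤ s' ∧ distFun f s' ≤ ENNReal.ofReal t}.Nonempty :=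
    ⟨s₀, hs₀.le, hne⟩
  -- right continuity step
  have hrc : ∃ n : ℕ, ENNReal.ofReal t < distFun f (s + 1/((n:ℝ)+1)) := by
    rw [distFun_iUnion s] at h
    exact lt_iSup_iff.1 h
  obtain ⟨n, hn⟩ := hrc
  have hbound : ∀ s' ∈ {s' : ℝ | 0 ≤ s' ∧ distFun f s' ≤ ENNReal.ofReal t},
      s + 1/((n:ℝ)+1) ≤ s' := by
    intro s' hs'
    by_contra hc
    push_neg at hc
    have := distFun_antitone f hc.le
    exact absurd (lt_of_lt_of_le hn (this.trans hs'.2)) (lt_irrefl _)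
  have : s + 1/((n:ℝ)+1) ≤ schwarz f t := le_csInf hSne hbound
  have hpos : (0:ℝ) < 1/((n:ℝ)+1) := by positivity
  linarith

lemma rearr_zero_null {φ : Sp → ℝ} (hm : Measurable φ) :
    volume {z : Ph | microE φ z < 0 ∧ aJacE φ (microE φ z) = 0} = 0 := by
  set T : Set ℝ := {e | e ≤ 0 ∧ aJacE φ e = 0} with hTdef
  by_cases hTne : T.Nonempty
  · set e' : ℝ := sSup T with he'def
    have hTbdd : BddAbove T := ⟨0, fun e he => he.1⟩
    have hsub : {z : Ph | microE φ z < 0 ∧ aJacE φ (microE φ z) = 0}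
        ⊆ {z : Ph | microE φ z < e'} ∪ {z : Ph | microE φ z = e'} := by
      intro z hz
      have hmem : microE φ z ∈ T := ⟨hz.1.le, hz.2⟩
      rcases lt_or_eq_of_le (le_csSup hTbdd hmem) with h | h
      · exact Or.inl h
      · exact Or.inr h
    have hlt0 : volume {z : Ph | microE φ z < e'} = 0 := by
      have hU : {z : Ph | microE φ z < e'} = ⋃ n : ℕ, {z : Ph | microE φ z < e' - 1/((n:ℝ)+1)} := by
        ext z
        simp only [Set.mem_setOf_eq, Set.mem_iUnion]
        constructor
        · intro hz
          obtain ⟨n, hn⟩ := exists_nat_one_div_lt (show (0:ℝ) < e' - microE φ z by linarith)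
          exact ⟨n, by linarith⟩
        · rintro ⟨n, hn⟩
          have : (0:ℝ) < 1/((n:ℝ)+1) := by positivity
          linarith
      rw [hU]
      refine measure_iUnion_null fun n => ?_
      have h1 : e' - 1/((n:ℝ)+1) < e' := by
        have : (0:ℝ) < 1/((n:ℝ)+1) := by positivity
        linarith
      obtain ⟨e'', he''T, he''⟩ := exists_lt_of_lt_csSup hTne h1
      have hle : volume {z : Ph | microE φ z < e' - 1/((n:ℝ)+1)} ≤ aJacE φ e'' :=
        measure_mono fun z hz => lt_trans hz he''
      exact le_antisymm (hle.trans_eq he''T.2) zero_le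
    exact measure_mono_null hsub (measure_union_null hlt0 (microE_level_null hm e'))
  · refine measure_mono_null (fun z hz => ?_) (measure_empty (μ := (volume : Measure Ph)))
    exact absurd ⟨microE φ z, hz.1.le, hz.2⟩ hTne
lemma part1_core {f : Ph → ℝ} (hfm : Measurable f) (hf0 : ∀ z, 0 ≤ f z)
    (hIf : ∫⁻ z, ENNReal.ofReal (f z) ∂(volume : Measure Ph) ≠ ∞)
    {φ : Sp → ℝ} (hm : Measurable φ) (hfin : ∀ e < (0:ℝ), aJacE φ e < ∞)
    (hinf : volume {z : Ph | microE φ z < 0} = ∞) {s : ℝ} (hs : 0 ≤ s) :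
    distFun (rearr f φ) s = distFun f s := by
  set M : ℝ≥0∞ := distFun f s with hMdef
  set A : Set Ph := {z : Ph | microE φ z < 0 ∧ aJacE φ (microE φ z) < M} with hAdef
  set N : Set Ph := {z : Ph | microE φ z < 0 ∧ aJacE φ (microE φ z) = 0} with hNdef
  set P : Set Ph := {z : Ph | s < rearr f φ z} with hPdef
  have hPA : P ⊆ A := by
    intro z hz
    simp only [hPdef, Set.mem_setOf_eq] at hz
    rw [rearr] at hz
    split at hz
    case isTrue hlt =>
      have h1 := schwarz_gt_imp hs hz
      have h2 : ENNReal.ofReal (aJac φ (microE φ z)) = aJacE φ (microE φ z) := by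
        rw [aJac, ENNReal.ofReal_toReal (hfin _ hlt).ne]
      rw [h2] at h1
      exact ⟨hlt, h1⟩
    case isFalse => linarith
  have hANP : A ⊆ P ∪ N := by
    intro z hz
    obtain ⟨hlt, hMlt⟩ := hz
    by_cases h0 : aJacE φ (microE φ z) = 0
    · exact Or.inr ⟨hlt, h0⟩
    · left
      have hfin' := (hfin _ hlt).ne
      have ht : 0 < aJac φ (microE φ z) := ENNReal.toReal_pos h0 hfin'
      have h2 : ENNReal.ofReal (aJac φ (microE φ z)) = aJacE φ (microE φ z) := by
        rw [aJac, ENNReal.ofReal_toReal hfin']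
      have := imp_schwarz_gt hf0 hfm hIf hs ht (h2 ▸ hMlt)
      simp only [hPdef, Set.mem_setOf_eq]
      rw [rearr, if_pos hlt]
      exact this
  have hAM : volume A = M := key_measure hm hfin hinf M
  have hN0 : volume N = 0 := rearr_zero_null hm
  refine le_antisymm ?_ ?_
  · calc volume P ≤ volume A := measure_mono hPA
      _ = M := hAM
  · calc M = volume A := hAM.symm
      _ ≤ volume (P ∪ N) := measure_mono hANP
      _ ≤ volume P + volume N := measure_union_le _ _
      _ = volume P := by rw [hN0, add_zero]

lemma measurable_rearr {f : Ph → ℝ} (hfm : Measurable f) (hf0 : ∀ z, 0 ≤ f z)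
    (hIf : ∫⁻ z, ENNReal.ofReal (f z) ∂(volume : Measure Ph) ≠ ∞)
    {φ : Sp → ℝ} (hm : Measurable φ) (hfin : ∀ e < (0:ℝ), aJacE φ e < ∞) :
    Measurable (rearr f φ) := by
  have hH : Measurable (fun e : ℝ => if e < 0 then schwarz f (aJac φ e) else 0) := by
    apply measurable_of_Ioi
    intro a
    rcases lt_or_ge a 0 with ha | ha
    · have : (fun e : ℝ => if e < 0 then schwarz f (aJac φ e) else 0) ⁻¹' (Set.Ioi a)
          = Set.univ := by
        refine Set.eq_univ_of_forall fun e => ?_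
        simp only [Set.mem_preimage, Set.mem_Ioi]
        refine lt_of_lt_of_le ha ?_
        split
        · exact schwarz_nonneg f _
        · exact le_refl 0
      rw [this]; exact MeasurableSet.univ
    · have hset : (fun e : ℝ => if e < 0 then schwarz f (aJac φ e) else 0) ⁻¹' (Set.Ioi a)
          = ({e : ℝ | e < 0} ∩ {e : ℝ | aJacE φ e = 0} ∩ {e : ℝ | a < schwarz f 0})
            ∪ ({e : ℝ | e < 0} ∩ {e : ℝ | aJacE φ e = 0}ᶜ ∩ {e : ℝ | aJacE φ e < distFun f a}) := by
        ext e
        simp only [Set.mem_preimage, Set.mem_Ioi, Set.mem_union, Set.mem_inter_iff,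
          Set.mem_setOf_eq, Set.mem_compl_iff]
        by_cases he : e < 0
        · simp only [he, if_true, true_and]
          by_cases h0 : aJacE φ e = 0
          · have haj : aJac φ e = 0 := by rw [aJac, h0]; rfl
            simp only [h0, haj, not_true, false_and, or_false, true_and]
          · have hfe := (hfin e he).ne
            have ht : 0 < aJac φ e := ENNReal.toReal_pos h0 hfe
            have h2 : ENNReal.ofReal (aJac φ e) = aJacE φ e := by
              rw [aJac, ENNReal.ofReal_toReal hfe]
            simp only [h0, false_and, false_or, not_false_iff, true_and]
            constructor
            · intro hgt
              rw [← h2]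
              exact schwarz_gt_imp ha hgt
            · intro hlt
              exact imp_schwarz_gt hf0 hfm hIf ha ht (h2 ▸ hlt)
        · simp only [he, if_false, false_and, or_self, iff_false, not_lt]
          exact ha
      rw [hset]
      have hms1 : MeasurableSet {e : ℝ | aJacE φ e = 0} := by
        apply measurableSet_of_lowerSet
        intro a' b' hab hb
        simp only [Set.mem_setOf_eq] at hb ⊢
        exact le_antisymm (hb ▸ aJacE_mono φ hab) zero_le
      have hms2 : MeasurableSet {e : ℝ | aJacE φ e < distFun f a} := by
        apply measurableSet_of_lowerSet
        intro a' b' hab hb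
        exact lt_of_le_of_lt (aJacE_mono φ hab) hb
      have hms3 : MeasurableSet {e : ℝ | a < schwarz f 0} := by
        by_cases hc : a < schwarz f 0
        · have : {e : ℝ | a < schwarz f 0} = Set.univ := by
            refine Set.eq_univ_of_forall fun e => hc
          rw [this]; exact MeasurableSet.univ
        · have : {e : ℝ | a < schwarz f 0} = ∅ := by
            refine Set.eq_empty_of_forall_notMem fun e he => hc he
          rw [this]; exact MeasurableSet.empty
      exact ((measurableSet_Iio.inter hms1).inter hms3).union
        ((measurableSet_Iio.inter hms1.compl).inter hms2)
  exact hH.comp (measurable_microE hm)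
lemma measure_preimage_eq {g h : Ph → ℝ}
    (hg : AEMeasurable g (volume : Measure Ph)) (hh : AEMeasurable h volume)
    (hdist : ∀ s : ℝ, 0 ≤ s → distFun g s = distFun h s)
    (hfing : ∀ s : ℝ, 0 < s → distFun g s ≠ ∞)
    {U : Set ℝ} (hU : MeasurableSet U) (hU0 : U ⊆ Set.Ioi 0) :
    volume (g ⁻¹' U) = volume (h ⁻¹' U) := by
  set νg : Measure ℝ := Measure.map g volume with hνgdef
  set νh : Measure ℝ := Measure.map h volume with hνhdef
  have hIoi : ∀ (k : Ph → ℝ), AEMeasurable k (volume : Measure Ph) →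
      ∀ c : ℝ, Measure.map k volume (Set.Ioi c) = distFun k c := by
    intro k hk c
    rw [Measure.map_apply_of_aemeasurable hk measurableSet_Ioi]
    rfl
  have hres : ∀ ε : ℝ, 0 < ε → νg.restrict (Set.Ioi ε) = νh.restrict (Set.Ioi ε) := by
    intro ε hε
    have hfin : IsFiniteMeasure (νg.restrict (Set.Ioi ε)) := by
      constructor
      rw [Measure.restrict_apply_univ, hIoi g hg ε]
      exact (hfing ε hε).lt_top
    refine ext_of_generate_finite (Set.range Set.Ioi)
      (BorelSpace.measurable_eq.trans (borel_eq_generateFrom_Ioi ℝ)) isPiSystem_Ioi ?_ ?_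
    · rintro S ⟨b, rfl⟩
      rw [Measure.restrict_apply measurableSet_Ioi, Measure.restrict_apply measurableSet_Ioi,
        Set.Ioi_inter_Ioi, hIoi g hg _, hIoi h hh _]
      exact hdist _ (le_max_of_le_right hε.le)
    · rw [Measure.restrict_apply_univ, Measure.restrict_apply_univ, hIoi g hg, hIoi h hh]
      exact hdist _ hε.le
  have hkey : ∀ (k : Ph → ℝ), AEMeasurable k volume →
      volume (k ⁻¹' U) = ⨆ n : ℕ, (Measure.map k volume).restrict (Set.Ioi (1/((n:ℝ)+1))) U := by
    intro k hk
    rw [← Measure.map_apply_of_aemeasurable hk hU]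
    have hUn : U = ⋃ n : ℕ, U ∩ Set.Ioi (1/((n:ℝ)+1)) := by
      ext r
      simp only [Set.mem_iUnion, Set.mem_inter_iff, Set.mem_Ioi]
      constructor
      · intro hr
        obtain ⟨n, hn⟩ := exists_nat_one_div_lt (Set.mem_Ioi.1 (hU0 hr))
        exact ⟨n, hr, hn⟩
      · rintro ⟨n, hr, -⟩
        exact hr
    have hMono : Monotone fun n : ℕ => U ∩ Set.Ioi (1/((n:ℝ)+1)) := by
      intro a b hab r hr
      refine ⟨hr.1, ?_⟩
      have h1 : 1/((b:ℝ)+1) ≤ 1/((a:ℝ)+1) := by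
        apply one_div_le_one_div_of_le (by positivity)
        have : (a:ℝ) ≤ b := Nat.cast_le.2 hab
        linarith
      exact lt_of_le_of_lt h1 hr.2
    conv_lhs => rw [hUn]
    rw [hMono.measure_iUnion]
    refine iSup_congr fun n => ?_
    rw [Measure.restrict_apply hU]
  rw [hkey g hg, hkey h hh]
  refine iSup_congr fun n => ?_
  rw [hres (1/((n:ℝ)+1)) (by positivity)]

lemma lintegral_comp_eq {g h : Ph → ℝ}
    (hg : AEMeasurable g (volume : Measure Ph)) (hh : AEMeasurable h volume)
    (hg0 : ∀ z, 0 ≤ g z) (hh0 : ∀ z, 0 ≤ h z)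
    (hdist : ∀ s : ℝ, 0 ≤ s → distFun g s = distFun h s)
    (hfing : ∀ s : ℝ, 0 < s → distFun g s ≠ ∞)
    {u : ℝ → ℝ} (hu : Measurable u) (hu0 : ∀ t, 0 ≤ u t) (hu00 : u 0 = 0) :
    ∫⁻ z, ENNReal.ofReal (u (g z)) ∂(volume : Measure Ph)
      = ∫⁻ z, ENNReal.ofReal (u (h z)) ∂volume := by
  rw [MeasureTheory.lintegral_eq_lintegral_meas_lt volume
      (Filter.Eventually.of_forall fun z => hu0 _) (hu.comp_aemeasurable hg),
    MeasureTheory.lintegral_eq_lintegral_meas_lt volume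
      (Filter.Eventually.of_forall fun z => hu0 _) (hu.comp_aemeasurable hh)]
  refine MeasureTheory.lintegral_congr_ae ?_
  filter_upwards [MeasureTheory.self_mem_ae_restrict
    (measurableSet_Ioi : MeasurableSet (Set.Ioi (0:ℝ)))] with t ht
  set U : Set ℝ := {r : ℝ | 0 < r ∧ t < u r} with hUdef
  have hUm : MeasurableSet U :=
    (measurableSet_lt measurable_const measurable_id).inter
      (measurableSet_lt measurable_const hu)
  have hU0 : U ⊆ Set.Ioi 0 := fun r hr => hr.1
  have hpre : ∀ (k : Ph → ℝ), (∀ z, 0 ≤ k z) → {z : Ph | t < u (k z)} = k ⁻¹' U := by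
    intro k hk0
    ext z
    simp only [Set.mem_setOf_eq, Set.mem_preimage, hUdef, Set.mem_setOf_eq]
    constructor
    · intro hz
      refine ⟨?_, hz⟩
      rcases lt_or_eq_of_le (hk0 z) with hpos | heq
      · exact hpos
      · exfalso
        rw [← heq, hu00] at hz
        exact absurd (lt_trans ht hz) (lt_irrefl _)
    · exact fun hz => hz.2
  rw [hpre g hg0, hpre h hh0]
  exact measure_preimage_eq hg hh hdist hfing hUm hU0
lemma distFun_ne_top {f : Ph → ℝ} (hfm : Measurable f)
    (hIf : ∫⁻ z, ENNReal.ofReal (f z) ∂(volume : Measure Ph) ≠ ∞)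
    {s : ℝ} (hs : 0 < s) : distFun f s ≠ ∞ := by
  intro hc
  have h1 : {z : Ph | s < f z} ⊆ {z : Ph | ENNReal.ofReal s ≤ ENNReal.ofReal (f z)} :=
    fun z hz => ENNReal.ofReal_le_ofReal (le_of_lt hz)
  have h2 := MeasureTheory.mul_meas_ge_le_lintegral₀
    ((ENNReal.measurable_ofReal.comp hfm).aemeasurable) (ENNReal.ofReal s) (μ := volume)
  have h3 : ENNReal.ofReal s * distFun f s ≤ ∫⁻ z, ENNReal.ofReal (f z) ∂volume :=
    le_trans (mul_le_mul_right (measure_mono h1) _) h2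
  rw [hc, ENNReal.mul_top (by simp [ENNReal.ofReal_eq_zero, not_le, hs])] at h3
  exact hIf (top_le_iff.1 h3)
/-- equimeasurability of the rearrangement with respect to the microscopic
energy. -/
theorem stmt9 (p : ℝ) (hp : 3 / 2 < p) (f : Ph → ℝ) (hf : IsEp p f) (hne : f ≠ 0)
    (q : ℝ) (hq : 3 < q) (φ : Sp → ℝ) (hφ : IsPhiq q φ) :
    (∀ s : ℝ, 0 ≤ s → distFun (rearr f φ) s = distFun f s) ∧
    ∀ β : ℝ → ℝ, ContDiffOn ℝ 1 β (Ici 0) → (∀ t, 0 ≤ t → 0 ≤ β t) → β 0 = 0 →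
      ∫ z : Ph, β (rearr f φ z) = ∫ z : Ph, β (f z) := by
  have hfm := hf.meas
  have hf0 := hf.nonneg
  have hIf : ∫⁻ z, ENNReal.ofReal (f z) ∂(volume : Measure Ph) ≠ ∞ :=
    hf.l1.lintegral_lt_top.ne
  -- measurable modification of φ
  have hφaesm := hφ.lq.aestronglyMeasurable
  set φ' : Sp → ℝ := hφaesm.mk φ with hφ'def
  have hφ'meas : Measurable φ' := hφaesm.stronglyMeasurable_mk.measurable
  have hae : φ =ᵐ[volume] φ' := hφaesm.ae_eq_mk
  have haePh : ∀ᵐ z : Ph, φ z.1 = φ' z.1 := by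
    have hnull : volume {x : Sp | ¬ φ x = φ' x} = 0 := ae_iff.1 hae
    have hPh : volume {z : Ph | ¬ φ z.1 = φ' z.1} = 0 := by
      have hsub : {z : Ph | ¬ φ z.1 = φ' z.1}
          ⊆ {x : Sp | ¬ φ x = φ' x} ×ˢ (Set.univ : Set Sp) := fun z hz => ⟨hz, trivial⟩
      refine measure_mono_null hsub ?_
      rw [MeasureTheory.Measure.volume_eq_prod, Measure.prod_prod, hnull, zero_mul]
    exact ae_iff.2 hPh
  have hmic : ∀ᵐ z : Ph, microE φ z = microE φ' z :=
    haePh.mono fun z h => by rw [microE, microE, h]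
  have haJ : aJacE φ = aJacE φ' := by
    funext e
    apply measure_congr
    rw [Filter.eventuallyEq_set]
    filter_upwards [hmic] with z h
    simp only [Set.mem_setOf_eq, h]
  have haJac : aJac φ = aJac φ' := by funext e; rw [aJac, aJac, haJ]
  have hrearr_ae : rearr f φ =ᵐ[volume] rearr f φ' := by
    filter_upwards [hmic] with z h
    rw [rearr, rearr, h, haJac]
  -- properties of φ'
  have hLq' : ∫⁻ x, ENNReal.ofReal (|φ' x| ^ q) ∂(volume : Measure Sp) < ∞ := by
    have h0 := lintegral_abs_rpow_lt_top (by linarith : (0:ℝ) < q) hφ.lq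
    have heq : ∫⁻ x, ENNReal.ofReal (|φ x| ^ q) ∂(volume : Measure Sp)
        = ∫⁻ x, ENNReal.ofReal (|φ' x| ^ q) ∂volume :=
      MeasureTheory.lintegral_congr_ae (hae.mono fun x h => by simp only [h])
    exact heq ▸ h0
  have hfin' : ∀ e < (0:ℝ), aJacE φ' e < ∞ :=
    fun e he => aJacE_lt_top hq.le hφ'meas hLq' he
  have hlow : ∀ x : Sp, mPhi φ ≤ (1 + ‖x‖) * |φ x| := by
    intro x
    exact ciInf_le ⟨0, by rintro y ⟨x', rfl⟩; positivity⟩ x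
  have hinfφ : volume {z : Ph | microE φ z < 0} = ∞ :=
    microE_neg_top hφ.m_pos hlow hφ.nonpos
  have hinf' : volume {z : Ph | microE φ' z < 0} = ∞ := by
    have heq : volume {z : Ph | microE φ z < 0} = volume {z : Ph | microE φ' z < 0} := by
      apply measure_congr
      rw [Filter.eventuallyEq_set]
      filter_upwards [hmic] with z h
      simp only [Set.mem_setOf_eq, h]
    exact heq ▸ hinfφ
  have hpart1 : ∀ s : ℝ, 0 ≤ s → distFun (rearr f φ) s = distFun f s := by
    intro s hs
    have h1 : distFun (rearr f φ) s = distFun (rearr f φ') s := by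
      apply measure_congr
      rw [Filter.eventuallyEq_set]
      filter_upwards [hrearr_ae] with z h
      simp only [Set.mem_setOf_eq, h]
    rw [h1]
    exact part1_core hfm hf0 hIf hφ'meas hfin' hinf' hs
  refine ⟨hpart1, ?_⟩
  intro β hβ hβ0 hβ00
  set u : ℝ → ℝ := fun t => β (max t 0) with hudef
  have hucont : Continuous u :=
    (hβ.continuousOn).comp_continuous (continuous_id.max continuous_const)
      fun t => Set.mem_Ici.2 (le_max_right _ _)
  have hu0 : ∀ t, 0 ≤ u t := fun t => hβ0 _ (le_max_right _ _)
  have hu00 : u 0 = 0 := by simp only [hudef, max_self]; simpa using hβ00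
  have hg : AEMeasurable (rearr f φ) (volume : Measure Ph) :=
    (measurable_rearr hfm hf0 hIf hφ'meas hfin').aemeasurable.congr hrearr_ae.symm
  have hfing : ∀ s : ℝ, 0 < s → distFun (rearr f φ) s ≠ ∞ := by
    intro s hs
    rw [hpart1 s hs.le]
    exact distFun_ne_top hfm hIf hs
  have hL := lintegral_comp_eq hg hfm.aemeasurable (rearr_nonneg f φ) hf0 hpart1 hfing
    hucont.measurable hu0 hu00
  have hβg : ∀ z : Ph, β (rearr f φ z) = u (rearr f φ z) := by
    intro z
    simp only [hudef]
    rw [max_eq_left (rearr_nonneg f φ z)]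
  have hβf : ∀ z : Ph, β (f z) = u (f z) := by
    intro z
    simp only [hudef]
    rw [max_eq_left (hf0 z)]
  have hsm_g : AEStronglyMeasurable (fun z : Ph => u (rearr f φ z)) volume :=
    (hucont.measurable.comp_aemeasurable hg).aestronglyMeasurable
  have hsm_f : AEStronglyMeasurable (fun z : Ph => u (f z)) volume :=
    (hucont.measurable.comp hfm).aestronglyMeasurable
  calc ∫ z : Ph, β (rearr f φ z)
      = ∫ z : Ph, u (rearr f φ z) :=
        MeasureTheory.integral_congr_ae (Filter.Eventually.of_forall hβg)
    _ = (∫⁻ z : Ph, ENNReal.ofReal (u (rearr f φ z)) ∂volume).toReal :=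
        MeasureTheory.integral_eq_lintegral_of_nonneg_ae
          (Filter.Eventually.of_forall fun z => hu0 _) hsm_g
    _ = (∫⁻ z : Ph, ENNReal.ofReal (u (f z)) ∂volume).toReal := by rw [hL]
    _ = ∫ z : Ph, u (f z) :=
        (MeasureTheory.integral_eq_lintegral_of_nonneg_ae
          (Filter.Eventually.of_forall fun z => hu0 _) hsm_f).symm
    _ = ∫ z : Ph, β (f z) :=
        MeasureTheory.integral_congr_ae (Filter.Eventually.of_forall fun z => (hβf z).symm)
end
end
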